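/- arXiv:2208.06483 — 9 statements merged into one kernel-verified Lean document; each statement's English description precedes it below -/
import Mathlib

section
/- Let x ∈ ℂ with 0 < |x| < ρ, let y ∈ ℂ be any fixed square root of x (y² = x), and let z ∈ ℂ with |z| < |y|. Then ((y + 1)/(y − z))·f(yz) + ((y − 1)/(y + z))·f(−yz) = 2·∑_{n=0}^∞ R_n(x) z^n, the series converging. -/
open scoped ENNReal NNReal

set_option maxRecDepth 8000 in
set_option maxHeartbeats 1000000 in
/-- For `0 < |x| < ρ`, `y` a fixed square root of `x`, and `|z| < |y|`:
`((y+1)/(y−z))·f(yz) + ((y−1)/(y+z))·f(−yz) = 2·∑ R_n(x) z^n`, the series converging.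
Here `f(z) = ∑ d_k z^k` has nonzero coefficients, `d_0 = 1`, radius of convergence `ρ`,
`0 < ρ ≤ ∞`; `f_n` is the `n`-th partial sum, `R_{2n}(x) = f_{2n}(x)/x^n`,
`R_{2n+1}(x) = f_{2n+1}(x)/x^{n+1}` (encoded as `R n x = f_n(x)/x^((n+1)/2)` with
natural division). -/
theorem stmt_2 (d : ℕ → ℂ) (hd0 : d 0 = 1) (hdk : ∀ k, d k ≠ 0)
    (ρ : ℝ≥0∞) (hρ : 0 < ρ)
    (hconv : ∀ w : ℂ, (‖w‖₊ : ℝ≥0∞) < ρ → Summable (fun k => d k * w ^ k))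
    (x : ℂ) (hx0 : x ≠ 0) (hx : (‖x‖₊ : ℝ≥0∞) < ρ)
    (y : ℂ) (hyx : y ^ 2 = x) (z : ℂ) (hz : ‖z‖ < ‖y‖) :
    let f : ℂ → ℂ := fun w => ∑' k, d k * w ^ k
    let fn : ℕ → ℂ → ℂ := fun n w => ∑ k ∈ Finset.range (n + 1), d k * w ^ k
    let R : ℕ → ℂ → ℂ := fun n w => fn n w / w ^ ((n + 1) / 2)
    ∃ S : ℂ, HasSum (fun n => R n x * z ^ n) S ∧
      (y + 1) / (y - z) * f (y * z) + (y - 1) / (y + z) * f (-(y * z)) = 2 * S := by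
  intro f fn R
  have hy : y ≠ 0 := by
    intro h; apply hx0; rw [← hyx, h]; ring
  have hyn : (0:ℝ) < ‖y‖ := norm_pos_iff.mpr hy
  have hr : ‖z / y‖ < 1 := by
    rw [norm_div, div_lt_one hyn]; exact hz
  -- series
  set u : ℕ → ℂ := fun n => (z / y) ^ n with hu_def
  set u' : ℕ → ℂ := fun n => (-(z / y)) ^ n with hu'_def
  set v : ℕ → ℂ := fun k => d k * (y * z) ^ k with hv_def
  set v' : ℕ → ℂ := fun k => d k * (-(y * z)) ^ k with hv'_def
  have hu : Summable fun n => ‖u n‖ := by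
    simpa [hu_def, norm_pow] using summable_geometric_of_lt_one (norm_nonneg (z/y)) hr
  have hu' : Summable fun n => ‖u' n‖ := by
    simpa [hu'_def, norm_pow] using summable_geometric_of_lt_one (norm_nonneg (z/y)) hr
  -- bound for v
  have hxsum : Summable fun k => d k * x ^ k := hconv x hx
  obtain ⟨C, hC⟩ : ∃ C, ∀ k, ‖d k * x ^ k‖ ≤ C := by
    have h1 : Filter.Tendsto (fun k => ‖d k * x ^ k‖) Filter.atTop (nhds 0) := by
      simpa using hxsum.tendsto_atTop_zero.norm
    obtain ⟨C, hC⟩ := h1.bddAbove_range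
    exact ⟨C, fun k => hC ⟨k, rfl⟩⟩
  have hnormv : ∀ k, ‖v k‖ = ‖d k * x ^ k‖ * ‖z / y‖ ^ k := by
    intro k
    have hxy : ‖x‖ = ‖y‖ ^ 2 := by rw [← hyx, norm_pow]
    have h2 : ‖x‖ * ‖z / y‖ = ‖y‖ * ‖z‖ := by
      rw [hxy, norm_div, sq, mul_assoc, ← mul_div_assoc, mul_div_cancel_left₀ _ hyn.ne']
    calc ‖v k‖ = ‖d k‖ * (‖y‖ * ‖z‖) ^ k := by
          rw [hv_def]; rw [norm_mul, norm_pow, norm_mul]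
      _ = ‖d k‖ * (‖x‖ * ‖z / y‖) ^ k := by rw [h2]
      _ = ‖d k * x ^ k‖ * ‖z / y‖ ^ k := by
          rw [mul_pow, norm_mul, norm_pow, mul_assoc]
  have hvbound : ∀ k, ‖v k‖ ≤ C * ‖z / y‖ ^ k := by
    intro k
    rw [hnormv k]
    exact mul_le_mul_of_nonneg_right (hC k) (pow_nonneg (norm_nonneg _) k)
  have hgeoC : Summable fun k => C * ‖z / y‖ ^ k :=
    (summable_geometric_of_lt_one (norm_nonneg _) hr).mul_left C
  have hv : Summable fun k => ‖v k‖ :=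
    Summable.of_nonneg_of_le (fun k => norm_nonneg _) hvbound hgeoC
  have hv' : Summable fun k => ‖v' k‖ := by
    have : ∀ k, ‖v' k‖ = ‖v k‖ := by
      intro k; simp [hv_def, hv'_def, norm_mul, norm_pow]
    simpa [this] using hv
  -- Cauchy products
  set c : ℕ → ℂ := fun n => ∑ k ∈ Finset.range (n + 1), u k * v (n - k) with hc_def
  set c' : ℕ → ℂ := fun n => ∑ k ∈ Finset.range (n + 1), u' k * v' (n - k) with hc'_def
  have hA : (∑' n, u n) * (∑' k, v k) = ∑' n, c n :=
    tsum_mul_tsum_eq_tsum_sum_range_of_summable_norm hu hv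
  have hB : (∑' n, u' n) * (∑' k, v' k) = ∑' n, c' n :=
    tsum_mul_tsum_eq_tsum_sum_range_of_summable_norm hu' hv'
  have hcs : Summable c := (summable_norm_sum_mul_range_of_summable_norm hu hv).of_norm
  have hcs' : Summable c' := (summable_norm_sum_mul_range_of_summable_norm hu' hv').of_norm
  -- closed form for c
  have key : ∀ N, c N = z ^ N * (∑ j ∈ Finset.range (N + 1), d j * x ^ j) / y ^ N := by
    intro N
    rw [hc_def]
    simp only
    rw [← Finset.sum_range_reflect (fun k => u k * v (N - k)) (N + 1),
      Finset.mul_sum, Finset.sum_div]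
    refine Finset.sum_congr rfl fun j hj => ?_
    simp only [Nat.add_sub_cancel]
    have hjN : j ≤ N := Nat.lt_succ_iff.mp (Finset.mem_range.mp hj)
    rw [Nat.sub_sub_self hjN]
    simp only [hu_def, hv_def]
    rw [← hyx]
    rw [div_pow, mul_pow, div_mul_eq_mul_div,
      div_eq_div_iff (pow_ne_zero _ hy) (pow_ne_zero _ hy)]
    have hz' : z ^ (N - j) * z ^ j = z ^ N := by
      rw [← pow_add, Nat.sub_add_cancel hjN]
    have hy' : y ^ j * y ^ (N - j) = y ^ N := by
      rw [← pow_add, Nat.add_sub_cancel' hjN]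
    rw [← hz', ← hy']
    ring
  have key' : ∀ N, c' N = (-1) ^ N * c N := by
    intro N
    rw [hc_def, hc'_def]
    simp only [Finset.mul_sum]
    refine Finset.sum_congr rfl fun k hk => ?_
    have hkN : k ≤ N := Nat.lt_succ_iff.mp (Finset.mem_range.mp hk)
    simp only [hu_def, hu'_def, hv_def, hv'_def]
    rw [show -(z / y) = (-1 : ℂ) * (z / y) by ring,
      show -(y * z) = (-1 : ℂ) * (y * z) by ring, mul_pow, mul_pow]
    have hone : (-1:ℂ) ^ k * ((-1:ℂ) ^ (N - k)) = (-1) ^ N := by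
      rw [← pow_add, Nat.add_sub_cancel' hkN]
    calc (-1:ℂ) ^ k * (z / y) ^ k * (d (N - k) * ((-1) ^ (N - k) * (y * z) ^ (N - k)))
        = ((-1:ℂ) ^ k * (-1) ^ (N - k)) * ((z / y) ^ k * (d (N - k) * (y * z) ^ (N - k))) := by
          ring
      _ = (-1) ^ N * ((z / y) ^ k * (d (N - k) * (y * z) ^ (N - k))) := by rw [hone]
  -- term identity: (y+1)/y * c n + (y-1)/y * c' n = 2 * (R n x * z ^ n)
  have term : ∀ n, (y + 1) / y * c n + (y - 1) / y * c' n = 2 * (R n x * z ^ n) := by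
    intro n
    rw [key n, key' n, key n]
    show _ = 2 * ((∑ j ∈ Finset.range (n + 1), d j * x ^ j) / x ^ ((n + 1) / 2) * z ^ n)
    set F := ∑ j ∈ Finset.range (n + 1), d j * x ^ j with hF
    rcases Nat.even_or_odd n with ⟨m, hm⟩ | ⟨m, hm⟩
    · have h1 : (n + 1) / 2 = m := by omega
      have h2 : x ^ m = y ^ n := by rw [← hyx, ← pow_mul]; congr 1; omega
      have h3 : ((-1:ℂ)) ^ n = 1 := by
        rw [hm]; rw [show m + m = 2 * m by ring, pow_mul]; norm_num
      rw [h1, h2, h3]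
      have hyn' : (y:ℂ) ^ n ≠ 0 := pow_ne_zero _ hy
      field_simp
      ring
    · have h1 : (n + 1) / 2 = m + 1 := by omega
      have h2 : x ^ (m + 1) = y ^ (n + 1) := by rw [← hyx, ← pow_mul]; congr 1; omega
      have h3 : ((-1:ℂ)) ^ n = -1 := by
        rw [hm, pow_add, pow_mul]; norm_num
      rw [h1, h2, h3]
      have hyn' : (y:ℂ) ^ n ≠ 0 := pow_ne_zero _ hy
      have hyn1 : (y:ℂ) ^ (n + 1) ≠ 0 := pow_ne_zero _ hy
      field_simp
      ring
  -- summability of the R-series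
  have hsum2 : Summable fun n => (y + 1) / y * c n + (y - 1) / y * c' n :=
    (hcs.mul_left _).add (hcs'.mul_left _)
  have hgsum : Summable fun n => R n x * z ^ n := by
    have h := hsum2.mul_left (2⁻¹ : ℂ)
    refine h.congr fun n => ?_
    rw [term n]
    ring
  refine ⟨∑' n, R n x * z ^ n, hgsum.hasSum, ?_⟩
  -- rewrite LHS
  have hfyz : f (y * z) = ∑' k, v k := rfl
  have hfyz' : f (-(y * z)) = ∑' k, v' k := rfl
  have hgeo1 : ∑' n, u n = (1 - z / y)⁻¹ := tsum_geometric_of_norm_lt_one hr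
  have hgeo2 : ∑' n, u' n = (1 + z / y)⁻¹ := by
    have := tsum_geometric_of_norm_lt_one (ξ := -(z/y)) (by simpa using hr)
    simpa [sub_neg_eq_add] using this
  have hyz1 : y * (1 - z / y) = y - z := by
    rw [mul_sub, mul_one, mul_div_cancel₀ _ hy]
  have hyz2 : y * (1 + z / y) = y + z := by
    rw [mul_add, mul_one, mul_div_cancel₀ _ hy]
  have hden1 : (y + 1) / (y - z) = (y + 1) / y * (1 - z / y)⁻¹ := by
    rw [← hyz1, ← div_div, div_eq_mul_inv ((y + 1) / y)]
  have hden2 : (y - 1) / (y + z) = (y - 1) / y * (1 + z / y)⁻¹ := by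
    rw [← hyz2, ← div_div, div_eq_mul_inv ((y - 1) / y)]
  rw [hfyz, hfyz', hden1, hden2, ← hgeo1, ← hgeo2]
  have e1 : (y + 1) / y * (∑' n, u n) * ∑' k, v k = (y + 1) / y * ∑' n, c n := by
    rw [mul_assoc, hA]
  have e2 : (y - 1) / y * (∑' n, u' n) * ∑' k, v' k = (y - 1) / y * ∑' n, c' n := by
    rw [mul_assoc, hB]
  rw [e1, e2, ← tsum_mul_left, ← tsum_mul_left,
    ← Summable.tsum_add (hcs.mul_left _) (hcs'.mul_left _), ← tsum_mul_left]
  exact tsum_congr term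
end

section
/- Let x ∈ ℂ with 0 < |x| < ρ and let y ∈ ℂ be any fixed square root of x (y² = x). Then for every n ≥ 0, R_n(x) = (1/(4πi)) · ∮_{|z| = |y|/2} ( ((y + 1)/(y − z))·f(yz) + ((y − 1)/(y + z))·f(−yz) ) · z^{−n−1} dz, where the contour integral is over the circle of radius |y|/2 centered at 0, traversed counterclockwise. -/
open scoped ENNReal NNReal Real

private lemma aux_summable_norm (d : ℕ → ℂ) (X : ℂ)
    (hs : Summable fun k => d k * X ^ k) {w : ℂ} (hw : ‖w‖ < ‖X‖) :
    Summable fun k => ‖d k * w ^ k‖ := by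
  have hX0 : 0 < ‖X‖ := lt_of_le_of_lt (norm_nonneg w) hw
  obtain ⟨C, hC⟩ := (hs.tendsto_atTop_zero.norm.bddAbove_range)
  set t := ‖w‖ / ‖X‖ with ht
  have ht0 : 0 ≤ t := div_nonneg (norm_nonneg _) hX0.le
  have ht1 : t < 1 := (div_lt_one hX0).2 hw
  refine Summable.of_nonneg_of_le (fun k => norm_nonneg _) (fun k => ?_)
    ((summable_geometric_of_lt_one ht0 ht1).mul_left C)
  have h1 : ‖d k * w ^ k‖ = ‖d k * X ^ k‖ * t ^ k := by
    have hXk : ‖X‖ ^ k ≠ 0 := pow_ne_zero _ (ne_of_gt hX0)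
    simp only [norm_mul, norm_pow, ht, div_pow]
    rw [mul_assoc, mul_div_assoc', mul_comm (‖X‖ ^ k), mul_div_assoc, div_self hXk, mul_one]
  rw [h1]
  exact mul_le_mul_of_nonneg_right (hC ⟨k, rfl⟩) (pow_nonneg ht0 k)


private lemma aux_geom1 (y w : ℂ) (hy0 : y ≠ 0) (hyw : y - w ≠ 0) (hwy : ‖w / y‖ < 1) :
    (∑' m, (y + 1) / y * (w / y) ^ m) = (y + 1) / (y - w) := by
  rw [tsum_mul_left, tsum_geometric_of_norm_lt_one hwy]
  have e : (1 : ℂ) - w / y = (y - w) / y := by field_simp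
  rw [e, inv_div, div_mul_div_comm, mul_comm y (y - w), mul_div_mul_right _ _ hy0]

private lemma aux_geom2 (y w : ℂ) (hy0 : y ≠ 0) (hyw : y + w ≠ 0) (hwy : ‖w / y‖ < 1) :
    (∑' m, (y - 1) / y * (-(w / y)) ^ m) = (y - 1) / (y + w) := by
  rw [tsum_mul_left, tsum_geometric_of_norm_lt_one (by rwa [norm_neg])]
  have e : (1 : ℂ) - -(w / y) = (y + w) / y := by field_simp; ring
  rw [e, inv_div, div_mul_div_comm, mul_comm y (y + w), mul_div_mul_right _ _ hy0]

private lemma aux_cauchy1 (d : ℕ → ℂ) (y w : ℂ) (hy0 : y ≠ 0) (hyw : y - w ≠ 0)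
    (hwy : ‖w / y‖ < 1) (hA : Summable fun k => ‖d k * (y * w) ^ k‖) :
    HasSum (fun nn => w ^ nn * ((y + 1) / y * y⁻¹ ^ nn *
        (∑ j ∈ Finset.range (nn + 1), d j * (y ^ 2) ^ j)))
      (((y + 1) / (y - w)) * ∑' k, d k * (y * w) ^ k) := by
  rw [mul_comm ((y + 1) / (y - w))]
  have hB : Summable fun m => ‖(y + 1) / y * (w / y) ^ m‖ := by
    simp only [norm_mul, norm_pow]
    exact (summable_geometric_of_lt_one (norm_nonneg _) hwy).mul_left _
  have h1 := hasSum_sum_range_mul_of_summable_norm hA hB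
  rw [aux_geom1 y w hy0 hyw hwy] at h1
  have ht1 : ∀ nn, (∑ k ∈ Finset.range (nn + 1),
      (d k * (y * w) ^ k) * ((y + 1) / y * (w / y) ^ (nn - k)))
      = w ^ nn * ((y + 1) / y * y⁻¹ ^ nn *
        (∑ j ∈ Finset.range (nn + 1), d j * (y ^ 2) ^ j)) := by
    intro nn
    have hterm : ∀ k ∈ Finset.range (nn + 1),
        (d k * (y * w) ^ k) * ((y + 1) / y * (w / y) ^ (nn - k))
        = w ^ nn * ((y + 1) / y * y⁻¹ ^ nn * (d k * (y ^ 2) ^ k)) := by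
      intro k hk
      have hk' : k ≤ nn := Nat.lt_succ_iff.mp (Finset.mem_range.1 hk)
      obtain ⟨m, rfl⟩ : ∃ m, nn = k + m := ⟨nn - k, (Nat.add_sub_cancel' hk').symm⟩
      rw [Nat.add_sub_cancel_left]
      have hyk : (y * y⁻¹) ^ k = 1 := by rw [mul_inv_cancel₀ hy0, one_pow]
      linear_combination (-(d k * w ^ k * w ^ m * (y + 1) * y⁻¹ * y⁻¹ ^ m * y ^ k)) * hyk
    rw [Finset.sum_congr rfl hterm, ← Finset.mul_sum, ← Finset.mul_sum]
  simpa only [ht1] using h1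

private lemma aux_cauchy2 (d : ℕ → ℂ) (y w : ℂ) (hy0 : y ≠ 0) (hyw : y + w ≠ 0)
    (hwy : ‖w / y‖ < 1) (hA : Summable fun k => ‖d k * (-(y * w)) ^ k‖) :
    HasSum (fun nn => w ^ nn * ((y - 1) / y * (-y⁻¹) ^ nn *
        (∑ j ∈ Finset.range (nn + 1), d j * (y ^ 2) ^ j)))
      (((y - 1) / (y + w)) * ∑' k, d k * (-(y * w)) ^ k) := by
  rw [mul_comm ((y - 1) / (y + w))]
  have hB : Summable fun m => ‖(y - 1) / y * (-(w / y)) ^ m‖ := by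
    simp only [norm_mul, norm_pow, norm_neg]
    exact (summable_geometric_of_lt_one (norm_nonneg _) hwy).mul_left _
  have h1 := hasSum_sum_range_mul_of_summable_norm hA hB
  rw [aux_geom2 y w hy0 hyw hwy] at h1
  have ht1 : ∀ nn, (∑ k ∈ Finset.range (nn + 1),
      (d k * (-(y * w)) ^ k) * ((y - 1) / y * (-(w / y)) ^ (nn - k)))
      = w ^ nn * ((y - 1) / y * (-y⁻¹) ^ nn *
        (∑ j ∈ Finset.range (nn + 1), d j * (y ^ 2) ^ j)) := by
    intro nn
    have hterm : ∀ k ∈ Finset.range (nn + 1),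
        (d k * (-(y * w)) ^ k) * ((y - 1) / y * (-(w / y)) ^ (nn - k))
        = w ^ nn * ((y - 1) / y * (-y⁻¹) ^ nn * (d k * (y ^ 2) ^ k)) := by
      intro k hk
      have hk' : k ≤ nn := Nat.lt_succ_iff.mp (Finset.mem_range.1 hk)
      obtain ⟨m, rfl⟩ : ∃ m, nn = k + m := ⟨nn - k, (Nat.add_sub_cancel' hk').symm⟩
      rw [Nat.add_sub_cancel_left]
      have hyk : (y * y⁻¹) ^ k = 1 := by rw [mul_inv_cancel₀ hy0, one_pow]
      linear_combination (-(d k * (-1) ^ k * (-1) ^ m * w ^ k * w ^ m * (y - 1) * y⁻¹ * y⁻¹ ^ m * y ^ k)) * hyk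
    rw [Finset.sum_congr rfl hterm, ← Finset.mul_sum, ← Finset.mul_sum]
  simpa only [ht1] using h1

set_option maxHeartbeats 1000000 in
/-- For `0 < |x| < ρ` and `y` a fixed square root of `x`, for every `n ≥ 0`,
`R_n(x) = (1/(4πi)) ∮_{|z| = |y|/2} (((y+1)/(y−z))·f(yz) + ((y−1)/(y+z))·f(−yz)) z^{−n−1} dz`,
the contour being the counterclockwise circle of radius `|y|/2` centred at `0`. -/
theorem stmt_3 (d : ℕ → ℂ) (hd0 : d 0 = 1) (hdk : ∀ k, d k ≠ 0)
    (ρ : ℝ≥0∞) (hρ : 0 < ρ)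
    (hconv : ∀ w : ℂ, (‖w‖₊ : ℝ≥0∞) < ρ → Summable (fun k => d k * w ^ k))
    (x : ℂ) (hx0 : x ≠ 0) (hx : (‖x‖₊ : ℝ≥0∞) < ρ)
    (y : ℂ) (hyx : y ^ 2 = x) (n : ℕ) :
    let f : ℂ → ℂ := fun w => ∑' k, d k * w ^ k
    let fn : ℕ → ℂ → ℂ := fun k w => ∑ j ∈ Finset.range (k + 1), d j * w ^ j
    let R : ℕ → ℂ → ℂ := fun k w => fn k w / w ^ ((k + 1) / 2)
    R n x = (4 * ↑π * Complex.I)⁻¹ *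
      ∮ z in C(0, ‖y‖ / 2),
        ((y + 1) / (y - z) * f (y * z) + (y - 1) / (y + z) * f (-(y * z))) *
          z ^ (-(n : ℤ) - 1) := by
  intro f fn R
  have hy0 : y ≠ 0 := by
    rintro rfl; exact hx0 (by simpa using hyx.symm)
  have hyn : 0 < ‖y‖ := norm_pos_iff.2 hy0
  have hxn : 0 < ‖x‖ := norm_pos_iff.2 hx0
  have hyy : ‖y‖ * ‖y‖ = ‖x‖ := by rw [← norm_mul, ← sq, hyx]
  -- pick X with ‖x‖ < ‖X‖ and summability at X
  obtain ⟨rX, hrX1, hrX2⟩ := ENNReal.lt_iff_exists_nnreal_btwn.1 hx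
  set X : ℂ := ((rX : ℝ) : ℂ) with hXdef
  have hXnorm : ‖X‖ = (rX : ℝ) := by
    simp [hXdef, Complex.norm_real, abs_of_nonneg rX.coe_nonneg]
  have hxX : ‖x‖ < ‖X‖ := by
    rw [hXnorm]
    exact_mod_cast (by exact_mod_cast hrX1 : ‖x‖₊ < rX)
  have hsX : Summable fun k => d k * X ^ k := by
    apply hconv
    rw [show (‖X‖₊ : ℝ≥0∞) = (rX : ℝ≥0∞) by
      congr 1; ext; simp [coe_nnnorm, hXnorm]]
    exact hrX2
  have hnorm : ∀ w : ℂ, ‖w‖ < ‖X‖ → Summable fun k => ‖d k * w ^ k‖ :=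
    fun w hw => aux_summable_norm d X hsX hw
  -- power series of f
  set F : FormalMultilinearSeries ℂ ℂ ℂ :=
    fun m => ContinuousMultilinearMap.mkPiRing ℂ (Fin m) (d m) with hFdef
  have hFrad : (‖X‖₊ : ℝ≥0∞) ≤ F.radius := by
    apply F.le_radius_of_tendsto (l := (0 : ℝ))
    have h := hsX.tendsto_atTop_zero.norm
    rw [norm_zero] at h
    convert h using 2 with m
    simp [hFdef, ContinuousMultilinearMap.norm_mkPiRing, norm_mul, norm_pow, coe_nnnorm]
  have hmemball : ∀ w : ℂ, ‖w‖ < ‖X‖ → w ∈ Metric.eball (0 : ℂ) (‖X‖₊ : ℝ≥0∞) := by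
    intro w hw
    rw [Metric.mem_eball, edist_zero_right]
    exact_mod_cast hw
  have hfball : HasFPowerSeriesOnBall f F 0 (‖X‖₊ : ℝ≥0∞) := by
    refine ⟨hFrad, ?_, ?_⟩
    · exact_mod_cast (lt_of_le_of_lt hxn.le hxX : (0:ℝ) < ‖X‖)
    · intro w hw
      have hw' : ‖w‖ < ‖X‖ := by
        rw [Metric.mem_eball, edist_zero_right] at hw
        exact_mod_cast hw
      have hsum : Summable fun k => d k * w ^ k := (hnorm w hw').of_norm
      have h2 : (fun m => F m fun _ => w) = fun k => d k * w ^ k := by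
        funext k
        simp [hFdef, ContinuousMultilinearMap.mkPiRing_apply, smul_eq_mul, mul_comm]
      rw [h2, zero_add]
      exact hsum.hasSum
  have hfdiff : ∀ w : ℂ, ‖w‖ < ‖X‖ → DifferentiableAt ℂ f w := fun w hw =>
    (hfball.differentiableOn w (hmemball w hw)).differentiableAt
      (Metric.isOpen_eball.mem_nhds (hmemball w hw))
  -- the function g
  set g : ℂ → ℂ := fun z =>
    (y + 1) / (y - z) * f (y * z) + (y - 1) / (y + z) * f (-(y * z)) with hgdef
  have hgdiff : DifferentiableOn ℂ g (Metric.closedBall (0 : ℂ) (‖y‖ / 2)) := by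
    intro z hz
    have hz' : ‖z‖ ≤ ‖y‖ / 2 := by simpa using Metric.mem_closedBall.1 hz
    have hz2 : ‖z‖ < ‖y‖ := lt_of_le_of_lt hz' (by linarith)
    have hyz : ‖y * z‖ < ‖X‖ := by
      rw [norm_mul]
      have : ‖y‖ * ‖z‖ ≤ ‖y‖ * (‖y‖ / 2) := by nlinarith
      nlinarith
    have hyzneg : ‖-(y * z)‖ < ‖X‖ := by rwa [norm_neg]
    have h1 : y - z ≠ 0 := by
      intro h
      rw [sub_eq_zero] at h
      rw [← h] at hz2
      exact lt_irrefl _ hz2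
    have h2 : y + z ≠ 0 := by
      intro h
      have : z = -y := by linear_combination h
      rw [this, norm_neg] at hz2
      exact lt_irrefl _ hz2
    apply DifferentiableAt.differentiableWithinAt
    apply DifferentiableAt.add
    · exact ((differentiableAt_const _).div
        ((differentiableAt_const _).sub differentiableAt_id) h1).mul
        ((hfdiff _ hyz).comp z (differentiableAt_id.const_mul y))
    · exact ((differentiableAt_const _).div
        ((differentiableAt_const _).add differentiableAt_id) h2).mul
        ((hfdiff _ hyzneg).comp z ((differentiableAt_id.const_mul y).neg))
  -- partial sums and coefficients
  set S : ℕ → ℂ := fun m => ∑ j ∈ Finset.range (m + 1), d j * x ^ j with hSdef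
  have hnormx : Summable fun k => ‖d k * x ^ k‖ := hnorm x hxX
  set Cs : ℝ := ∑' k, ‖d k * x ^ k‖ with hCs
  have hCs0 : 0 ≤ Cs := tsum_nonneg fun _ => norm_nonneg _
  have hSb : ∀ m, ‖S m‖ ≤ Cs := by
    intro m
    calc ‖S m‖ ≤ ∑ j ∈ Finset.range (m + 1), ‖d j * x ^ j‖ := norm_sum_le _ _
      _ ≤ Cs := hnormx.sum_le_tsum _ (fun _ _ => norm_nonneg _)
  set a : ℕ → ℂ := fun m =>
    (y + 1) / y * y⁻¹ ^ m * S m + (y - 1) / y * (-y⁻¹) ^ m * S m with hadef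
  set P : FormalMultilinearSeries ℂ ℂ ℂ :=
    fun m => ContinuousMultilinearMap.mkPiRing ℂ (Fin m) (a m) with hPdef
  set r0 : ℝ≥0 := ‖y‖₊ / 2 with hr0def
  have hr0' : (r0 : ℝ) = ‖y‖ / 2 := by
    simp [hr0def, NNReal.coe_div, coe_nnnorm]
  have hr0pos : 0 < r0 := by
    rw [← NNReal.coe_pos, hr0']; positivity
  have hPrad : (r0 : ℝ≥0∞) ≤ P.radius := by
    apply P.le_radius_of_bound ((‖(y + 1) / y‖ + ‖(y - 1) / y‖) * Cs)
    intro m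
    have e1 : ‖y⁻¹‖ * (r0 : ℝ) = 1 / 2 := by
      rw [hr0', norm_inv]
      rw [inv_mul_eq_div, div_div]
      rw [div_eq_div_iff (by positivity) (by norm_num)]
      ring
    have hnam : ‖a m‖ ≤ (‖(y + 1) / y‖ + ‖(y - 1) / y‖) * Cs * ‖y⁻¹‖ ^ m := by
      calc ‖a m‖ ≤ ‖(y + 1) / y * y⁻¹ ^ m * S m‖ + ‖(y - 1) / y * (-y⁻¹) ^ m * S m‖ :=
            norm_add_le _ _
        _ = ‖(y + 1) / y‖ * ‖y⁻¹‖ ^ m * ‖S m‖ + ‖(y - 1) / y‖ * ‖y⁻¹‖ ^ m * ‖S m‖ := by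
            simp [norm_mul, norm_pow, norm_neg]
        _ ≤ ‖(y + 1) / y‖ * ‖y⁻¹‖ ^ m * Cs + ‖(y - 1) / y‖ * ‖y⁻¹‖ ^ m * Cs := by
            gcongr <;> exact hSb m
        _ = (‖(y + 1) / y‖ + ‖(y - 1) / y‖) * Cs * ‖y⁻¹‖ ^ m := by ring
    calc ‖P m‖ * (r0 : ℝ) ^ m = ‖a m‖ * (r0 : ℝ) ^ m := by
          rw [hPdef]; rw [ContinuousMultilinearMap.norm_mkPiRing]
      _ ≤ (‖(y + 1) / y‖ + ‖(y - 1) / y‖) * Cs * ‖y⁻¹‖ ^ m * (r0 : ℝ) ^ m := by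
          gcongr
      _ = (‖(y + 1) / y‖ + ‖(y - 1) / y‖) * Cs * (‖y⁻¹‖ * (r0 : ℝ)) ^ m := by
          rw [mul_pow]; ring
      _ = (‖(y + 1) / y‖ + ‖(y - 1) / y‖) * Cs * (1 / 2 : ℝ) ^ m := by rw [e1]
      _ ≤ (‖(y + 1) / y‖ + ‖(y - 1) / y‖) * Cs * 1 := by
          have h12 : ((1 : ℝ) / 2) ^ m ≤ 1 := pow_le_one₀ (by norm_num) (by norm_num)
          have hAnn : 0 ≤ (‖(y + 1) / y‖ + ‖(y - 1) / y‖) * Cs := by positivity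
          nlinarith
      _ = (‖(y + 1) / y‖ + ‖(y - 1) / y‖) * Cs := mul_one _
  -- g has power series P on ball r0
  have hP : HasFPowerSeriesOnBall g P 0 (r0 : ℝ≥0∞) := by
    refine ⟨hPrad, by exact_mod_cast hr0pos, ?_⟩
    intro w hw
    have hw' : ‖w‖ < ‖y‖ / 2 := by
      rw [Metric.mem_eball, edist_zero_right] at hw
      have := (ENNReal.coe_lt_coe.1 hw : ‖w‖₊ < r0)
      rw [← NNReal.coe_lt_coe, hr0'] at this
      simpa [coe_nnnorm] using this
    have hwy : ‖w / y‖ < 1 := by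
      rw [norm_div, div_lt_one hyn]; linarith
    have hywX : ‖y * w‖ < ‖X‖ := by
      rw [norm_mul]; nlinarith
    have hyw : y - w ≠ 0 := by
      intro h; rw [sub_eq_zero] at h; rw [← h] at hw'; linarith
    have hyw' : y + w ≠ 0 := by
      intro h
      have : w = -y := by linear_combination h
      rw [this, norm_neg] at hw'; linarith
    -- first term
    have hA1 : Summable fun k => ‖d k * (y * w) ^ k‖ := hnorm _ hywX
    have hA2 : Summable fun k => ‖d k * (-(y * w)) ^ k‖ := by
      apply hnorm
      rwa [norm_neg]
    have h1 := aux_cauchy1 d y w hy0 hyw hwy hA1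
    have h2 := aux_cauchy2 d y w hy0 hyw' hwy hA2
    rw [hyx] at h1 h2
    have hcomb := h1.add h2
    have hfun : (fun nn => P nn fun _ => w)
        = fun nn => w ^ nn * ((y + 1) / y * y⁻¹ ^ nn * S nn)
          + w ^ nn * ((y - 1) / y * (-y⁻¹) ^ nn * S nn) := by
      funext m
      simp only [hPdef, ContinuousMultilinearMap.mkPiRing_apply, Fin.prod_const,
        smul_eq_mul, hadef]
      ring
    rw [hfun, zero_add]
    exact hcomb
  -- Cauchy power series coincides with P
  have hc : HasFPowerSeriesOnBall g (cauchyPowerSeries g 0 (r0 : ℝ)) 0 (r0 : ℝ≥0∞) := by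
    apply DifferentiableOn.hasFPowerSeriesOnBall _ hr0pos
    rwa [hr0']
  have hPeq : cauchyPowerSeries g 0 (r0 : ℝ) = P :=
    hc.hasFPowerSeriesAt.eq_formalMultilinearSeries hP.hasFPowerSeriesAt
  have hcoeff : (2 * ↑π * Complex.I)⁻¹ •
      (∮ z in C(0, (r0 : ℝ)), (1 / (z - 0) : ℂ) ^ n • (z - 0)⁻¹ • g z) = a n := by
    have h := cauchyPowerSeries_apply g 0 (r0 : ℝ) n 1
    rw [hPeq] at h
    simp only [hPdef, ContinuousMultilinearMap.mkPiRing_apply, Fin.prod_const,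
      one_pow, one_smul] at h
    exact h.symm
  have h2πi : (2 * ↑π * Complex.I : ℂ) ≠ 0 :=
    mul_ne_zero (mul_ne_zero two_ne_zero (by exact_mod_cast Real.pi_ne_zero)) Complex.I_ne_zero
  have hJ : (∮ z in C(0, ‖y‖ / 2),
      ((y + 1) / (y - z) * f (y * z) + (y - 1) / (y + z) * f (-(y * z))) *
        z ^ (-(n : ℤ) - 1)) = 2 * ↑π * Complex.I * a n := by
    have hcong : (∮ z in C(0, ‖y‖ / 2),
        ((y + 1) / (y - z) * f (y * z) + (y - 1) / (y + z) * f (-(y * z))) *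
          z ^ (-(n : ℤ) - 1))
        = ∮ z in C(0, (r0 : ℝ)), (1 / (z - 0) : ℂ) ^ n • (z - 0)⁻¹ • g z := by
      rw [hr0']
      apply circleIntegral.integral_congr (by positivity)
      intro z _
      simp only [smul_eq_mul, sub_zero, hgdef, one_div]
      rw [show (-(n : ℤ) - 1) = -((n : ℕ) + 1 : ℕ) by push_cast; ring]
      rw [zpow_neg, zpow_natCast, pow_succ, mul_inv, inv_pow]
      ring
    rw [hcong, ← hcoeff, smul_eq_mul, ← mul_assoc, mul_inv_cancel₀ h2πi, one_mul]
  rw [hJ]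
  -- final algebra
  have h4πi : (4 * ↑π * Complex.I : ℂ) ≠ 0 :=
    mul_ne_zero (mul_ne_zero (by norm_num : (4:ℂ) ≠ 0) (by exact_mod_cast Real.pi_ne_zero)) Complex.I_ne_zero
  have hRval : R n x = S n / x ^ ((n + 1) / 2) := rfl
  have hfin : a n = 2 * (S n / x ^ ((n + 1) / 2)) := by
    rcases Nat.even_or_odd n with ⟨m, hm⟩ | ⟨m, hm⟩
    · subst hm
      have hdiv : (m + m + 1) / 2 = m := by omega
      have hneg : (-y⁻¹ : ℂ) ^ (m + m) = (y⁻¹ : ℂ) ^ (m + m) := Even.neg_pow ⟨m, rfl⟩ _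
      rw [hadef]
      simp only [hdiv, hneg]
      rw [← hyx]
      have hx2 : (y ^ 2 : ℂ) ^ m ≠ 0 := pow_ne_zero _ (by rwa [hyx])
      field_simp
      have hyk : (y * y⁻¹) ^ (m + m) = 1 := by rw [mul_inv_cancel₀ hy0, one_pow]
      linear_combination (y * S (m + m) * 2) * hyk
    · subst hm
      have hdiv : (2 * m + 1 + 1) / 2 = m + 1 := by omega
      have hneg : (-y⁻¹ : ℂ) ^ (2 * m + 1) = -((y⁻¹ : ℂ) ^ (2 * m + 1)) :=
        Odd.neg_pow ⟨m, rfl⟩ _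
      rw [hadef]
      simp only [hdiv, hneg]
      rw [← hyx]
      have hx2 : (y ^ 2 : ℂ) ^ (m + 1) ≠ 0 := pow_ne_zero _ (by rwa [hyx])
      field_simp
      have hyk : (y * y⁻¹) ^ (2 * m + 1) = 1 := by rw [mul_inv_cancel₀ hy0, one_pow]
      linear_combination (y * S (2 * m + 1) * 2) * hyk
  rw [hRval, hfin]
  field_simp
  ring
end

section
/- Let c > 0 satisfy c² < ρ and f(w) ≠ 0 for all w ∈ ℂ with |w| ≤ c². Then for every n ≥ 0, (1/(2πi)) · ∮_{|y| = c} f_{2n}(y²) / (y^{2n+1} · f(y²)) dy equals 1 if n = 0 and equals 0 if n ≥ 1, where the contour integral is over the circle of radius c centered at 0, traversed counterclockwise. -/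
open scoped ENNReal NNReal Real

open Metric in
lemma diffOn_tsum_aux (e : ℕ → ℂ) {r : ℝ} (hr : 0 < r)
    (hs : Summable (fun k => e k * (r : ℂ) ^ k)) :
    DifferentiableOn ℂ (fun w : ℂ => ∑' k, e k * w ^ k) (Metric.ball 0 r) := by
  set p := FormalMultilinearSeries.ofScalars ℂ e with hp
  obtain ⟨C, hC⟩ : ∃ C, ∀ k, ‖e k * (r : ℂ) ^ k‖ ≤ C := by
    obtain ⟨C, hC⟩ := (hs.tendsto_atTop_zero.norm.bddAbove_range)
    exact ⟨C, fun k => hC ⟨k, rfl⟩⟩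
  have hrad : ENNReal.ofReal r ≤ p.radius := by
    have := p.le_radius_of_bound C (r := r.toNNReal) (fun k => by
      have h1 : ‖p k‖ * (r.toNNReal : ℝ) ^ k = ‖e k * (r : ℂ) ^ k‖ := by
        rw [hp, FormalMultilinearSeries.ofScalars_norm, Real.coe_toNNReal _ hr.le,
          norm_mul, norm_pow, Complex.norm_real, Real.norm_of_nonneg hr.le]
      rw [h1]; exact hC k)
    rwa [ENNReal.ofReal]
  have hradpos : 0 < p.radius :=
    lt_of_lt_of_le (by simp [hr] : (0 : ℝ≥0∞) < ENNReal.ofReal r) hrad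
  have hdiff : DifferentiableOn ℂ p.sum (Metric.eball 0 p.radius) :=
    (p.hasFPowerSeriesOnBall hradpos).differentiableOn
  have hsub : Metric.ball (0 : ℂ) r ⊆ Metric.eball 0 p.radius := by
    intro w hw
    rw [Metric.mem_eball, edist_zero_right, ← ofReal_norm]
    exact lt_of_lt_of_le ((ENNReal.ofReal_lt_ofReal_iff hr).2 (by simpa using hw)) hrad
  refine (hdiff.mono hsub).congr fun w _ => ?_
  rw [FormalMultilinearSeries.sum]
  exact tsum_congr fun k => by
    rw [hp, FormalMultilinearSeries.ofScalars_apply_eq, smul_eq_mul]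

set_option maxHeartbeats 2000000 in
/-- If `c > 0`, `c² < ρ` and `f(w) ≠ 0` for `|w| ≤ c²`, then for every `n ≥ 0`,
`(1/(2πi)) ∮_{|y|=c} f_{2n}(y²) / (y^{2n+1} f(y²)) dy` equals `1` if `n = 0` and `0` if
`n ≥ 1`, the contour being the counterclockwise circle of radius `c` centred at `0`. -/
theorem stmt_4 (d : ℕ → ℂ) (hd0 : d 0 = 1) (hdk : ∀ k, d k ≠ 0)
    (ρ : ℝ≥0∞) (hρ : 0 < ρ)
    (hconv : ∀ w : ℂ, (‖w‖₊ : ℝ≥0∞) < ρ → Summable (fun k => d k * w ^ k))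
    (c : ℝ) (hc : 0 < c) (hcρ : ENNReal.ofReal (c ^ 2) < ρ)
    (hfz : ∀ w : ℂ, ‖w‖ ≤ c ^ 2 → (∑' k, d k * w ^ k) ≠ 0) (n : ℕ) :
    (2 * ↑π * Complex.I)⁻¹ *
      (∮ y in C(0, c),
        (∑ k ∈ Finset.range (2 * n + 1), d k * (y ^ 2) ^ k) /
          (y ^ (2 * n + 1) * ∑' k, d k * (y ^ 2) ^ k)) =
      if n = 0 then 1 else 0 := by
  set N := 2 * n + 1 with hN
  -- pick r with c² < r and ofReal r < ρ
  obtain ⟨r, hr0, hcr', hrρ⟩ := ENNReal.lt_iff_exists_real_btwn.1 hcρ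
  have hcr : c ^ 2 < r := by
    rwa [ENNReal.ofReal_lt_ofReal_iff_of_nonneg (sq_nonneg c)] at hcr'
  have hrpos : 0 < r := lt_of_le_of_lt (sq_nonneg c) hcr
  have hnorm_lt : ∀ w : ℂ, ‖w‖ < r → (‖w‖₊ : ℝ≥0∞) < ρ := by
    intro w hw
    rw [← enorm_eq_nnnorm, ← ofReal_norm]
    exact lt_trans ((ENNReal.ofReal_lt_ofReal_iff hrpos).2 hw) hrρ
  have hsr : Summable (fun k => d k * (r : ℂ) ^ k) := by
    apply hconv
    have : (‖(r : ℂ)‖₊ : ℝ≥0∞) = ENNReal.ofReal r := by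
      rw [← enorm_eq_nnnorm, ← ofReal_norm, Complex.norm_real,
        Real.norm_of_nonneg hrpos.le]
    rw [this]; exact hrρ
  set F : ℂ → ℂ := fun w => ∑' k, d k * w ^ k with hFdef
  set R : ℂ → ℂ := fun w => ∑' k, d (k + N) * w ^ k with hRdef
  have hF : DifferentiableOn ℂ F (Metric.ball 0 r) := diffOn_tsum_aux d hrpos hsr
  have hsr' : Summable (fun k => d (k + N) * (r : ℂ) ^ k) := by
    have h1 : Summable (fun k => d (k + N) * (r : ℂ) ^ (k + N)) :=
      (summable_nat_add_iff N).2 hsr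
    have hrne : (r : ℂ) ^ N ≠ 0 := pow_ne_zero _ (by exact_mod_cast hrpos.ne')
    refine (h1.mul_right ((r : ℂ) ^ N)⁻¹).congr fun k => ?_
    rw [pow_add]
    field_simp
  have hR : DifferentiableOn ℂ R (Metric.ball 0 r) := diffOn_tsum_aux _ hrpos hsr'
  -- key identity
  have hkey : ∀ w : ℂ, ‖w‖ < r →
      F w = (∑ k ∈ Finset.range N, d k * w ^ k) + w ^ N * R w := by
    intro w hw
    have hsw : Summable (fun k => d k * w ^ k) := hconv w (hnorm_lt w hw)
    have h1 := (hsw.sum_add_tsum_nat_add N).symm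
    rw [hFdef]
    simp only []
    rw [h1]
    congr 1
    rw [hRdef]
    simp only []
    rw [← tsum_mul_left]
    exact tsum_congr fun k => by rw [pow_add]; ring
  -- the analytic correction term G
  set G : ℂ → ℂ := fun y => y ^ N * R (y ^ 2) / F (y ^ 2) with hGdef
  have hmap : ∀ y : ℂ, ‖y‖ ≤ c → ‖y ^ 2‖ < r := by
    intro y hy
    rw [norm_pow]
    calc ‖y‖ ^ 2 ≤ c ^ 2 := pow_le_pow_left₀ (norm_nonneg y) hy 2
    _ < r := hcr
  have hmap' : ∀ y : ℂ, ‖y‖ ≤ c → ‖y ^ 2‖ ≤ c ^ 2 := by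
    intro y hy
    rw [norm_pow]
    exact pow_le_pow_left₀ (norm_nonneg y) hy 2
  -- rewrite the integrand on the sphere
  have heq : Set.EqOn
      (fun y : ℂ => (∑ k ∈ Finset.range N, d k * (y ^ 2) ^ k) / (y ^ N * F (y ^ 2)))
      (fun y : ℂ => (y - 0) ^ (-(N : ℤ)) - G y) (Metric.sphere 0 c) := by
    intro y hy
    rw [mem_sphere_zero_iff_norm] at hy
    have hyne : y ≠ 0 := by
      intro h; rw [h, norm_zero] at hy; exact hc.ne hy
    have hFy : F (y ^ 2) ≠ 0 := hfz _ (hmap' y hy.le)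
    have hk := hkey (y ^ 2) (hmap y hy.le)
    have hP : (∑ k ∈ Finset.range N, d k * (y ^ 2) ^ k)
        = F (y ^ 2) - (y ^ 2) ^ N * R (y ^ 2) := by
      rw [hk]; ring
    have h2N : (y ^ 2) ^ N = y ^ N * y ^ N := by
      rw [← pow_mul, two_mul, pow_add]
    have hyN : y ^ N ≠ 0 := pow_ne_zero _ hyne
    simp only [hGdef, sub_zero, zpow_neg, zpow_natCast]
    rw [hP, h2N]
    field_simp
  rw [circleIntegral.integral_congr hc.le heq]
  have hGcont : ContinuousOn G (Metric.closedBall 0 c) := by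
    have hsq : ContinuousOn (fun y : ℂ => y ^ 2) (Metric.closedBall 0 c) :=
      (continuous_pow 2).continuousOn
    have hmapsTo : Set.MapsTo (fun y : ℂ => y ^ 2) (Metric.closedBall 0 c)
        (Metric.ball 0 r) := by
      intro y hy
      rw [Metric.mem_closedBall, dist_zero_right] at hy
      rw [Metric.mem_ball, dist_zero_right]
      exact hmap y hy
    refine ContinuousOn.div ?_ (hF.continuousOn.comp hsq hmapsTo) ?_
    · exact ((continuous_pow N).continuousOn).mul (hR.continuousOn.comp hsq hmapsTo)
    · intro y hy
      rw [Metric.mem_closedBall, dist_zero_right] at hy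
      exact hfz _ (hmap' y hy)
  have hGzero : (∮ y in C(0, c), G y) = 0 := by
    refine Complex.circleIntegral_eq_zero_of_differentiable_on_off_countable hc.le
      Set.countable_empty hGcont fun z hz => ?_
    have hz' : ‖z‖ < c := by
      have := hz.1; rwa [Metric.mem_ball, dist_zero_right] at this
    have h2 : z ^ 2 ∈ Metric.ball (0 : ℂ) r := by
      rw [Metric.mem_ball, dist_zero_right]; exact hmap z hz'.le
    have hFat : DifferentiableAt ℂ F (z ^ 2) :=
      hF.differentiableAt (Metric.isOpen_ball.mem_nhds h2)
    have hRat : DifferentiableAt ℂ R (z ^ 2) :=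
      hR.differentiableAt (Metric.isOpen_ball.mem_nhds h2)
    have hsq : DifferentiableAt ℂ (fun y : ℂ => y ^ 2) z := differentiableAt_pow 2
    exact ((differentiableAt_pow N).mul (hRat.comp z hsq)).div (DifferentiableAt.comp (g := F) z hFat hsq)
      (hfz _ (hmap' z hz'.le))
  have hint1 : CircleIntegrable (fun y : ℂ => (y - 0) ^ (-(N : ℤ))) 0 c := by
    rw [circleIntegrable_sub_zpow_iff]
    refine Or.inr (Or.inr ?_)
    rw [mem_sphere_zero_iff_norm, norm_zero, abs_of_pos hc]
    exact hc.ne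
  have hint2 : CircleIntegrable G 0 c :=
    ContinuousOn.circleIntegrable hc.le (hGcont.mono Metric.sphere_subset_closedBall)
  rw [circleIntegral.integral_sub hint1 hint2, hGzero, sub_zero]
  rcases Nat.eq_zero_or_pos n with hn0 | hn0
  · subst hn0
    have hNe : N = 1 := by simp [hN]
    have : (∮ y in C(0, c), (y - 0) ^ (-(N : ℤ))) = ∮ y in C(0, c), (y - 0)⁻¹ := by
      refine circleIntegral.integral_congr hc.le fun y _ => ?_
      rw [hNe]; norm_num
    rw [this, circleIntegral.integral_sub_inv_of_mem_ball (Metric.mem_ball_self hc),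
      if_pos rfl, inv_mul_cancel₀ Complex.two_pi_I_ne_zero]
  · have hNne : (-(N : ℤ)) ≠ -1 := by
      simp only [hN]
      omega
    rw [circleIntegral.integral_sub_zpow_of_ne hNne, mul_zero, if_neg hn0.ne']
end

section
/- Let c > 0 satisfy c² < ρ and f(w) ≠ 0 for all w ∈ ℂ with |w| ≤ c². Then for every n ≥ 0, (1/(2πi)) · ∮_{|y| = c} f_{2n+1}(y²) / (y^{2n+3} · f(y²)) dy = 0, where the contour integral is over the circle of radius c centered at 0, traversed counterclockwise. -/
open scoped ENNReal NNReal Real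

/-- A power series with coefficients summable against `r^k` is differentiable at points of
norm `< r`. -/
lemma diffAux (e : ℕ → ℂ) {r : ℝ≥0} (hr : Summable fun k => e k * (r : ℂ) ^ k)
    {z : ℂ} (hz : ‖z‖ < r) :
    DifferentiableAt ℂ (fun w : ℂ => ∑' k, e k * w ^ k) z := by
  set p : FormalMultilinearSeries ℂ ℂ ℂ := FormalMultilinearSeries.ofScalars ℂ e with hp
  have hsum : (fun w : ℂ => ∑' k, e k * w ^ k) = p.sum := by
    funext w
    simp only [FormalMultilinearSeries.sum, hp]
    exact tsum_congr fun k => by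
      rw [FormalMultilinearSeries.ofScalars_apply_eq, smul_eq_mul]
  -- bound on coefficients
  obtain ⟨C, hC⟩ : ∃ C, ∀ k, ‖e k * (r : ℂ) ^ k‖ ≤ C := by
    obtain ⟨C, hC⟩ := hr.tendsto_atTop_zero.norm.bddAbove_range
    exact ⟨C, fun k => hC ⟨k, rfl⟩⟩
  have hrad : (r : ℝ≥0∞) ≤ p.radius := by
    apply p.le_radius_of_bound C
    intro k
    have : ‖p k‖ = ‖e k‖ := FormalMultilinearSeries.ofScalars_norm (E := ℂ) e k
    rw [this]
    have := hC k
    rwa [norm_mul, norm_pow, Complex.norm_real, Real.norm_eq_abs, abs_of_nonneg r.coe_nonneg]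
      at this
  have hzr : z ∈ Metric.eball (0 : ℂ) p.radius := by
    rw [Metric.mem_eball, edist_eq_enorm_sub, sub_zero, enorm_eq_nnnorm]
    exact lt_of_lt_of_le (by exact_mod_cast hz) hrad
  have hpos : 0 < p.radius := lt_of_le_of_lt zero_le hzr
  have := (p.hasFPowerSeriesOnBall hpos).analyticAt_of_mem hzr
  rw [hsum]
  exact this.differentiableAt

set_option maxHeartbeats 2000000 in
/-- If `c > 0`, `c² < ρ` and `f(w) ≠ 0` for `|w| ≤ c²`, then for every `n ≥ 0`,
`(1/(2πi)) ∮_{|y|=c} f_{2n+1}(y²) / (y^{2n+3} f(y²)) dy = 0`, the contour being the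
counterclockwise circle of radius `c` centred at `0`. -/

theorem stmt_5 (d : ℕ → ℂ) (hd0 : d 0 = 1) (hdk : ∀ k, d k ≠ 0)
    (ρ : ℝ≥0∞) (hρ : 0 < ρ)
    (hconv : ∀ w : ℂ, (‖w‖₊ : ℝ≥0∞) < ρ → Summable (fun k => d k * w ^ k))
    (c : ℝ) (hc : 0 < c) (hcρ : ENNReal.ofReal (c ^ 2) < ρ)
    (hfz : ∀ w : ℂ, ‖w‖ ≤ c ^ 2 → (∑' k, d k * w ^ k) ≠ 0) (n : ℕ) :
    (2 * ↑π * Complex.I)⁻¹ *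
      (∮ y in C(0, c),
        (∑ k ∈ Finset.range (2 * n + 2), d k * (y ^ 2) ^ k) /
          (y ^ (2 * n + 3) * ∑' k, d k * (y ^ 2) ^ k)) = 0 := by
  set m : ℕ := 2 * n + 2 with hm
  -- choose an intermediate radius r with c^2 < r < ρ
  obtain ⟨r, hr1, hr2⟩ := ENNReal.lt_iff_exists_nnreal_btwn.1 hcρ
  have hc2r : c ^ 2 < (r : ℝ) := by
    have := (ENNReal.ofReal_lt_iff_lt_toReal (by positivity) (by simp)).1 hr1
    simpa using this
  -- summability of the series at radius r
  have hnr : (‖((r : ℝ) : ℂ)‖₊ : ℝ≥0∞) < ρ := by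
    simpa [Complex.nnnorm_real, r.nnnorm_eq] using hr2
  have hsumr : Summable fun k => d k * ((r : ℝ) : ℂ) ^ k := hconv _ hnr
  have hrpos : (0 : ℝ) < r := lt_trans (by positivity) hc2r
  have hrne : ((r : ℝ) : ℂ) ≠ 0 := by
    exact_mod_cast ne_of_gt hrpos
  -- summability of the tail coefficients at radius r
  have hsumr' : Summable fun k => d (k + m) * ((r : ℝ) : ℂ) ^ k := by
    have h1 : Summable fun k => d (k + m) * ((r : ℝ) : ℂ) ^ (k + m) :=
      (summable_nat_add_iff m).2 hsumr
    have h2 := h1.mul_right ((((r : ℝ) : ℂ)) ^ m)⁻¹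
    refine h2.congr fun k => ?_
    field_simp [pow_add]
    ring
  -- the tail function u
  set u : ℂ → ℂ := fun w => ∑' k, d (k + m) * w ^ k with hu
  set f : ℂ → ℂ := fun w => ∑' k, d k * w ^ k with hf
  -- summability at points of norm ≤ c^2
  have hsump : ∀ w : ℂ, ‖w‖ ≤ c ^ 2 → Summable fun k => d k * w ^ k := by
    intro w hw
    apply hconv
    calc (‖w‖₊ : ℝ≥0∞) = ENNReal.ofReal ‖w‖ := (ofReal_norm w).symm
      _ ≤ ENNReal.ofReal (c ^ 2) := ENNReal.ofReal_le_ofReal hw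
      _ < ρ := hcρ
  -- splitting of f
  have hsplit : ∀ w : ℂ, ‖w‖ ≤ c ^ 2 →
      f w = (∑ k ∈ Finset.range m, d k * w ^ k) + w ^ m * u w := by
    intro w hw
    have hs := hsump w hw
    have := Summable.sum_add_tsum_nat_add m hs
    rw [hf]
    beta_reduce
    rw [← this]
    congr 1
    rw [hu, ← tsum_mul_left]
    exact tsum_congr fun k => by rw [pow_add]; ring
  -- differentiability of f and u on the relevant region
  have hdf : ∀ w : ℂ, ‖w‖ ≤ c ^ 2 → DifferentiableAt ℂ f w := fun w hw =>
    diffAux d hsumr (lt_of_le_of_lt hw hc2r)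
  have hdu : ∀ w : ℂ, ‖w‖ ≤ c ^ 2 → DifferentiableAt ℂ u w := fun w hw =>
    diffAux (fun k => d (k + m)) hsumr' (lt_of_le_of_lt hw hc2r)
  -- the holomorphic part
  set G : ℂ → ℂ := fun y => y ^ (2 * n + 1) * u (y ^ 2) / f (y ^ 2) with hG
  have hnormsq : ∀ y : ℂ, ‖y‖ ≤ c → ‖y ^ 2‖ ≤ c ^ 2 := by
    intro y hy
    rw [norm_pow]
    exact pow_le_pow_left₀ (norm_nonneg _) hy 2
  have hGdiff : ∀ y ∈ Metric.closedBall (0 : ℂ) c, DifferentiableAt ℂ G y := by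
    intro y hy
    rw [Metric.mem_closedBall, dist_zero_right] at hy
    have h2 : ‖y ^ 2‖ ≤ c ^ 2 := hnormsq y hy
    exact ((differentiableAt_pow _).mul
      ((hdu _ h2).comp y (differentiableAt_pow 2))).div
      ((hdf _ h2).comp y (differentiableAt_pow 2)) (hfz _ h2)
  have hGzero : (∮ y in C(0, c), G y) = 0 := by
    refine Complex.circleIntegral_eq_zero_of_differentiable_on_off_countable hc.le
      Set.countable_empty (fun y hy => (hGdiff y hy).continuousAt.continuousWithinAt)
      (fun y hy => hGdiff y (Metric.ball_subset_closedBall hy.1))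
  -- the zpow part
  have hZzero : (∮ y in C(0, c), (y - 0) ^ (-(2 * (n : ℤ) + 3))) = 0 :=
    circleIntegral.integral_sub_zpow_of_ne (by omega) 0 0 c
  -- integrand equality on the circle
  have hEq : Set.EqOn
      (fun y : ℂ => (∑ k ∈ Finset.range (2 * n + 2), d k * (y ^ 2) ^ k) /
          (y ^ (2 * n + 3) * ∑' k, d k * (y ^ 2) ^ k))
      (fun y : ℂ => (y - 0) ^ (-(2 * (n : ℤ) + 3)) - G y)
      (Metric.sphere (0 : ℂ) c) := by
    intro y hy
    rw [Metric.mem_sphere, dist_zero_right] at hy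
    have hy0 : y ≠ 0 := by
      intro h; rw [h, norm_zero] at hy; exact absurd hy.symm (ne_of_gt hc)
    have h2 : ‖y ^ 2‖ ≤ c ^ 2 := hnormsq y hy.le
    have hfne : f (y ^ 2) ≠ 0 := hfz _ h2
    have hsp := hsplit (y ^ 2) h2
    simp only
    rw [show (∑' k, d k * (y ^ 2) ^ k) = f (y ^ 2) from rfl, hG]
    rw [sub_zero, show (-(2 * (n : ℤ) + 3)) = -((2 * n + 3 : ℕ) : ℤ) by push_cast; ring,
      zpow_neg, zpow_natCast]
    field_simp [hy0, hfne]
    rw [hsp]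
    simp only [hm]
    ring
  -- integrability of both pieces
  have hi1 : CircleIntegrable (fun y : ℂ => (y - 0) ^ (-(2 * (n : ℤ) + 3))) 0 c := by
    rw [circleIntegrable_sub_zpow_iff]
    right; right
    simp [abs_of_pos hc]
    exact fun h => hc.ne h
  have hi2 : CircleIntegrable G 0 c := by
    apply ContinuousOn.circleIntegrable hc.le
    intro y hy
    rw [Metric.mem_sphere, dist_zero_right] at hy
    exact (hGdiff y (by simpa [Metric.mem_closedBall, dist_zero_right] using hy.le)
      ).continuousAt.continuousWithinAt
  rw [circleIntegral.integral_congr hc.le hEq, circleIntegral.integral_sub hi1 hi2,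
    hZzero, hGzero, sub_zero, mul_zero]
end

section
/- Let 𝐋 be a ℂ-linear functional on the space of Laurent polynomials over ℂ such that 𝐋(1) = 1 and 𝐋(R_n · R_m) = 0 whenever n ≠ m (n, m ≥ 0). Let c > 0 satisfy c² < ρ and f(w) ≠ 0 for all w ∈ ℂ with |w| ≤ c². Then for every Laurent polynomial R, 𝐋(R) = (1/(2πi)) · ∮_{|y| = c} R(y²) / (y · f(y²)) dy, where the contour integral is over the circle of radius c centered at 0, traversed counterclockwise. -/
open scoped ENNReal NNReal Real

/-- The orthogonal Laurent polynomials associated with the partial sums of the power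
series `∑ d_k z^k`: `R_{2n} = ∑_{k=0}^{2n} d_k T^{k−n}`,
`R_{2n+1} = ∑_{k=0}^{2n+1} d_k T^{k−n−1}` (the shift being `(n+1)/2` in ℕ-division). -/
noncomputable def Rlp (d : ℕ → ℂ) (n : ℕ) : LaurentPolynomial ℂ :=
  ∑ k ∈ Finset.range (n + 1),
    LaurentPolynomial.C (d k) * LaurentPolynomial.T ((k : ℤ) - (((n + 1) / 2 : ℕ) : ℤ))

/-- Evaluation of a Laurent polynomial at a (nonzero) complex number. -/
noncomputable def leval (y : ℂ) (p : LaurentPolynomial ℂ) : ℂ :=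
  p.coeff.sum fun n a => a * y ^ n

open LaurentPolynomial hiding leval
open Metric Set
lemma leval_single (y : ℂ) (n : ℤ) (a : ℂ) :
    leval y (AddMonoidAlgebra.single n a) = a * y ^ n := by
  unfold leval; rw [AddMonoidAlgebra.coeff_single]
  exact Finsupp.sum_single_index (zero_mul _)

lemma leval_C_mul_T (y : ℂ) (n : ℤ) (a : ℂ) :
    leval y (LaurentPolynomial.C a * LaurentPolynomial.T n) = a * y ^ n := by
  rw [← LaurentPolynomial.single_eq_C_mul_T]; exact leval_single y n a

lemma leval_add (y : ℂ) (p q : LaurentPolynomial ℂ) :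
    leval y (p + q) = leval y p + leval y q := by
  unfold leval; rw [AddMonoidAlgebra.coeff_add]
  exact Finsupp.sum_add_index' (fun _ => zero_mul _) (fun _ a b => add_mul a b _)

lemma leval_smul (y : ℂ) (a : ℂ) (p : LaurentPolynomial ℂ) :
    leval y (a • p) = a * leval y p := by
  unfold leval
  rw [AddMonoidAlgebra.coeff_smul]
  rw [Finsupp.sum_smul_index (h := fun n x => x * y ^ n) (fun _ => zero_mul _), Finsupp.mul_sum]
  exact Finsupp.sum_congr fun n _ => by rw [mul_assoc]

lemma leval_zero (y : ℂ) : leval y (0 : LaurentPolynomial ℂ) = 0 := by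
  simp [leval]

lemma leval_one (y : ℂ) : leval y (1 : LaurentPolynomial ℂ) = 1 := by
  have : (1 : LaurentPolynomial ℂ) = AddMonoidAlgebra.single (0 : ℤ) (1 : ℂ) := rfl
  rw [this, leval_single]; simp

lemma leval_finset_sum {ι : Type*} (y : ℂ) (s : Finset ι) (f : ι → LaurentPolynomial ℂ) :
    leval y (∑ k ∈ s, f k) = ∑ k ∈ s, leval y (f k) := by
  induction s using Finset.cons_induction with
  | empty => simp [leval_zero]
  | cons a s ha ih => rw [Finset.sum_cons, Finset.sum_cons, leval_add, ih]

lemma CT_mem_iff (S : Submodule ℂ (LaurentPolynomial ℂ)) (a : ℂ) (ha : a ≠ 0) (n : ℤ) :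
    LaurentPolynomial.C a * LaurentPolynomial.T n ∈ S ↔
      (LaurentPolynomial.T n : LaurentPolynomial ℂ) ∈ S := by
  have h : LaurentPolynomial.C a * LaurentPolynomial.T n
      = a • (LaurentPolynomial.T n : LaurentPolynomial ℂ) := by
    rw [← LaurentPolynomial.single_eq_C_mul_T]
    show _ = a • AddMonoidAlgebra.single n (1 : ℂ)
    rw [AddMonoidAlgebra.smul_single, smul_eq_mul, mul_one]
  rw [h, Submodule.smul_mem_iff _ ha]

lemma Rlp_span (d : ℕ → ℂ) (hdk : ∀ k, d k ≠ 0) :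
    Submodule.span ℂ (Set.range (Rlp d)) = ⊤ := by
  set S := Submodule.span ℂ (Set.range (Rlp d)) with hS
  have extract : ∀ (m k₀ : ℕ), k₀ ∈ Finset.range (m + 1) →
      (∀ k ∈ Finset.range (m + 1), k ≠ k₀ →
        (LaurentPolynomial.T ((k : ℤ) - (((m + 1) / 2 : ℕ) : ℤ)) : LaurentPolynomial ℂ) ∈ S) →
      (LaurentPolynomial.T ((k₀ : ℤ) - (((m + 1) / 2 : ℕ) : ℤ)) : LaurentPolynomial ℂ) ∈ S := by
    intro m k₀ hk₀ hrest
    have hR : Rlp d m ∈ S := Submodule.subset_span ⟨m, rfl⟩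
    have hsum : ∑ k ∈ (Finset.range (m + 1)).erase k₀,
        LaurentPolynomial.C (d k) * LaurentPolynomial.T ((k : ℤ) - (((m + 1) / 2 : ℕ) : ℤ)) ∈ S :=
      Submodule.sum_mem _ fun k hk => by
        rw [CT_mem_iff S _ (hdk k)]
        exact hrest k (Finset.mem_of_mem_erase hk) (Finset.ne_of_mem_erase hk)
    have heq : LaurentPolynomial.C (d k₀) * LaurentPolynomial.T ((k₀ : ℤ) - (((m + 1) / 2 : ℕ) : ℤ))
        = Rlp d m - ∑ k ∈ (Finset.range (m + 1)).erase k₀,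
            LaurentPolynomial.C (d k) * LaurentPolynomial.T ((k : ℤ) - (((m + 1) / 2 : ℕ) : ℤ)) := by
      rw [Rlp, ← Finset.add_sum_erase _ _ hk₀]; ring
    rw [← CT_mem_iff S _ (hdk k₀), heq]
    exact Submodule.sub_mem _ hR hsum
  have key : ∀ N : ℕ, ∀ n : ℤ, n.natAbs ≤ N → (LaurentPolynomial.T n : LaurentPolynomial ℂ) ∈ S := by
    intro N
    induction N with
    | zero =>
      intro n hn
      obtain rfl : n = 0 := by omega
      have h := extract 0 0 (by simp) (by intro k hk hne; simp at hk; omega)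
      simpa using h
    | succ N ih =>
      have hneg : (LaurentPolynomial.T (-(N + 1) : ℤ) : LaurentPolynomial ℂ) ∈ S := by
        have hdiv : (((2 * N + 1 + 1) / 2 : ℕ) : ℤ) = (N : ℤ) + 1 := by
          omega
        have h := extract (2 * N + 1) 0 (by simp) ?_
        · rw [hdiv] at h
          have e : ((0 : ℕ) : ℤ) - ((N : ℤ) + 1) = -((N : ℤ) + 1) := by push_cast; ring
          rw [e] at h
          exact h
        · intro k hk hne
          rw [hdiv]
          apply ih
          simp only [Finset.mem_range] at hk
          omega
      intro n hn
      rcases Nat.lt_or_ge n.natAbs (N + 1) with h | h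
      · exact ih n (by omega)
      · have hn' : n = (N : ℤ) + 1 ∨ n = -((N : ℤ) + 1) := by omega
        rcases hn' with rfl | rfl
        · have hdiv : (((2 * N + 2 + 1) / 2 : ℕ) : ℤ) = (N : ℤ) + 1 := by
            omega
          have h := extract (2 * N + 2) (2 * N + 2) (by simp) ?_
          · rw [hdiv] at h
            have e : ((2 * N + 2 : ℕ) : ℤ) - ((N : ℤ) + 1) = (N : ℤ) + 1 := by push_cast; ring
            rw [e] at h
            exact h
          · intro k hk hne
            rw [hdiv]
            simp only [Finset.mem_range] at hk
            rcases eq_or_ne k 0 with rfl | hk0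
            · have e : ((0 : ℕ) : ℤ) - ((N : ℤ) + 1) = -((N : ℤ) + 1) := by push_cast; ring
              rw [e]
              exact hneg
            · apply ih; omega
        · exact hneg
  rw [eq_top_iff]
  rintro p -
  induction p using LaurentPolynomial.induction_on' with
  | add p q hp hq => exact Submodule.add_mem _ hp hq
  | C_mul_T n a =>
    rcases eq_or_ne a 0 with rfl | ha
    · simp only [map_zero, zero_mul]
      exact Submodule.zero_mem _
    · rw [CT_mem_iff S a ha]
      exact key n.natAbs n le_rfl
lemma diffAt_tsum {a : ℕ → ℂ} {t : ℝ}
    (hsum : ∀ w : ℂ, ‖w‖ < t → Summable fun k => a k * w ^ k)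
    {w : ℂ} (hw : ‖w‖ < t) :
    DifferentiableAt ℂ (fun z : ℂ => ∑' k, a k * z ^ k) w := by
  have h0w : (0 : ℝ) ≤ ‖w‖ := norm_nonneg w
  set t' : ℝ := (‖w‖ + t) / 2 with ht'
  have ht'1 : ‖w‖ < t' := by rw [ht']; linarith
  have ht'2 : t' < t := by rw [ht']; linarith
  have ht'0 : 0 < t' := by linarith
  set t'' : ℝ := (t' + t) / 2 with ht''
  have ht''1 : t' < t'' := by rw [ht'']; linarith
  have ht''2 : t'' < t := by rw [ht'']; linarith
  have ht''0 : 0 < t'' := by linarith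
  -- bound on coefficients
  have hsum'' : Summable fun k => a k * (t'' : ℂ) ^ k := by
    apply hsum
    rw [Complex.norm_real, Real.norm_eq_abs, abs_of_pos ht''0]
    exact ht''2
  have hbdd : BddAbove (Set.range fun n => ‖a n * (t'' : ℂ) ^ n‖) :=
    (hsum''.tendsto_atTop_zero.norm).bddAbove_range
  obtain ⟨C, hC⟩ := hbdd
  have hCb : ∀ n : ℕ, ‖a n‖ * t'' ^ n ≤ C := by
    intro n
    have := hC (Set.mem_range_self n)
    rwa [norm_mul, norm_pow, Complex.norm_real, Real.norm_eq_abs, abs_of_pos ht''0] at this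
  set p : FormalMultilinearSeries ℂ ℂ ℂ :=
    fun n => ContinuousMultilinearMap.mkPiRing ℂ (Fin n) (a n) with hp
  have hps : HasFPowerSeriesOnBall (fun z : ℂ => ∑' k, a k * z ^ k) p 0 (ENNReal.ofReal t') := by
    constructor
    · rw [ENNReal.ofReal_eq_coe_nnreal ht'0.le]
      apply p.le_radius_of_bound C
      intro n
      rw [hp]
      simp only [ContinuousMultilinearMap.norm_mkPiRing]
      calc ‖a n‖ * (⟨t', ht'0.le⟩ : ℝ≥0) ^ n ≤ ‖a n‖ * t'' ^ n := by
            apply mul_le_mul_of_nonneg_left _ (norm_nonneg _)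
            apply pow_le_pow_left₀ ht'0.le ht''1.le
        _ ≤ C := hCb n
    · exact ENNReal.ofReal_pos.2 ht'0
    · intro y hy
      rw [EMetric.mem_ball, edist_zero_right, ← ofReal_norm,
        ENNReal.ofReal_lt_ofReal_iff ht'0] at hy
      have hsy := hsum y (hy.trans ht'2)
      have : ∀ n : ℕ, (p n fun _ => y) = a n * y ^ n := by
        intro n
        rw [hp]
        simp [ContinuousMultilinearMap.mkPiRing_apply, smul_eq_mul, mul_comm]
      simp only [this, zero_add]
      exact hsy.hasSum
  apply hps.differentiableOn.differentiableAt
  apply EMetric.isOpen_ball.mem_nhds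
  rw [EMetric.mem_ball, edist_zero_right, ← ofReal_norm,
    ENNReal.ofReal_lt_ofReal_iff ht'0]
  exact ht'1

lemma circleIntegral_add' {f g : ℂ → ℂ} {c : ℂ} {R : ℝ} (hf : CircleIntegrable f c R)
    (hg : CircleIntegrable g c R) :
    (∮ z in C(c, R), (f z + g z)) = (∮ z in C(c, R), f z) + ∮ z in C(c, R), g z := by
  simp only [circleIntegral, smul_add, intervalIntegral.integral_add hf.out hg.out]

/-- If `𝐋` is a linear functional on Laurent polynomials with `𝐋 1 = 1` and
`𝐋(R_n R_m) = 0` for `n ≠ m`, and `c > 0` satisfies `c² < ρ` and `f(w) ≠ 0` for `|w| ≤ c²`,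
then `𝐋(R) = (1/(2πi)) ∮_{|y|=c} R(y²)/(y f(y²)) dy` for every Laurent polynomial `R`. -/
theorem stmt_6 (d : ℕ → ℂ) (hd0 : d 0 = 1) (hdk : ∀ k, d k ≠ 0)
    (ρ : ℝ≥0∞) (hρ : 0 < ρ)
    (hconv : ∀ w : ℂ, (‖w‖₊ : ℝ≥0∞) < ρ → Summable (fun k => d k * w ^ k))
    (L : LaurentPolynomial ℂ →ₗ[ℂ] ℂ) (hL1 : L 1 = 1)
    (horth : ∀ n m : ℕ, n ≠ m → L (Rlp d n * Rlp d m) = 0)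
    (c : ℝ) (hc : 0 < c) (hcρ : ENNReal.ofReal (c ^ 2) < ρ)
    (hfz : ∀ w : ℂ, ‖w‖ ≤ c ^ 2 → (∑' k, d k * w ^ k) ≠ 0)
    (R : LaurentPolynomial ℂ) :
    L R = (2 * ↑π * Complex.I)⁻¹ *
      ∮ y in C(0, c), leval (y ^ 2) R / (y * ∑' k, d k * (y ^ 2) ^ k) := by
  classical
  obtain ⟨u, hu1, hu2⟩ := exists_between hcρ
  have hune : u ≠ ⊤ := hu2.ne_top
  set r : ℝ := u.toReal with hr
  have hc2 : (0:ℝ) < c ^ 2 := by positivity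
  have hcr : c ^ 2 < r := by
    rw [hr, ← ENNReal.ofReal_lt_iff_lt_toReal hc2.le hune]
    exact hu1
  have hr0 : 0 < r := lt_trans hc2 hcr
  have hrconv : ∀ w : ℂ, ‖w‖ < r → Summable fun k => d k * w ^ k := by
    intro w hw
    apply hconv
    calc (‖w‖₊ : ℝ≥0∞) = ENNReal.ofReal ‖w‖ := (ofReal_norm w).symm
      _ < ENNReal.ofReal r := (ENNReal.ofReal_lt_ofReal_iff hr0).2 hw
      _ = u := ENNReal.ofReal_toReal hune
      _ < ρ := hu2
  set F : ℂ → ℂ := fun w => ∑' k, d k * w ^ k with hFdef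
  have hFdiff : ∀ w : ℂ, ‖w‖ ≤ c ^ 2 → DifferentiableAt ℂ F w :=
    fun w hw => diffAt_tsum hrconv (lt_of_le_of_lt hw hcr)
  have hFne : ∀ w : ℂ, ‖w‖ ≤ c ^ 2 → F w ≠ 0 := hfz
  have hF0 : F 0 = 1 := by
    rw [hFdef]
    simp only
    rw [tsum_eq_single 0 (fun k hk => by simp [zero_pow hk])]
    simp [hd0]
  have hyne : ∀ y : ℂ, y ∈ sphere (0:ℂ) c → y ≠ 0 := by
    intro y hy
    rw [mem_sphere_zero_iff_norm] at hy
    intro h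
    rw [h, norm_zero] at hy
    exact absurd hy.symm hc.ne'
  have hy2 : ∀ y : ℂ, y ∈ sphere (0:ℂ) c → ‖y ^ 2‖ = c ^ 2 := by
    intro y hy
    rw [mem_sphere_zero_iff_norm] at hy
    rw [norm_pow, hy]
  have hsq : ∀ y : ℂ, y ∈ closedBall (0:ℂ) c → ‖y ^ 2‖ ≤ c ^ 2 := by
    intro y hy
    rw [mem_closedBall_zero_iff] at hy
    rw [norm_pow]
    exact pow_le_pow_left₀ (norm_nonneg _) hy 2
  have hsqd : ∀ y : ℂ, DifferentiableAt ℂ (fun y : ℂ => y ^ 2) y :=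
    fun y => differentiableAt_pow 2
  have hGdiff : ∀ y ∈ closedBall (0:ℂ) c, DifferentiableAt ℂ (fun y : ℂ => (F (y ^ 2))⁻¹) y := by
    intro y hy
    exact ((hFdiff _ (hsq y hy)).comp y (hsqd y)).inv (hFne _ (hsq y hy))
  have hdenne : ∀ y ∈ sphere (0:ℂ) c, y * F (y ^ 2) ≠ 0 := fun y hy =>
    mul_ne_zero (hyne y hy) (hFne _ (hy2 y hy).le)
  have hdencont : ContinuousOn (fun y : ℂ => y * F (y ^ 2)) (closedBall (0:ℂ) c) := by
    intro y hy
    exact (differentiableAt_fun_id.mul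
      ((hFdiff _ (hsq y hy)).comp y (hsqd y))).continuousAt.continuousWithinAt
  have hInt : ∀ p : LaurentPolynomial ℂ,
      CircleIntegrable (fun y => leval (y ^ 2) p / (y * F (y ^ 2))) 0 c := by
    intro p
    apply ContinuousOn.circleIntegrable hc.le
    apply ContinuousOn.div
    · show ContinuousOn (fun y : ℂ => leval (y ^ 2) p) _
      have he : (fun y : ℂ => leval (y ^ 2) p)
          = fun y : ℂ => ∑ n ∈ p.coeff.support, p.coeff n * (y ^ 2) ^ n := rfl
      rw [he]
      apply continuousOn_finset_sum
      intro n _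
      apply ContinuousOn.mul continuousOn_const
      apply ContinuousOn.zpow₀ ((continuous_pow 2).continuousOn) n
      intro y hy
      exact Or.inl (pow_ne_zero 2 (hyne y hy))
    · exact hdencont.mono sphere_subset_closedBall
    · exact hdenne
  suffices H : ∀ q ∈ Submodule.span ℂ (Set.range (Rlp d)),
      L q = (2 * ↑π * Complex.I)⁻¹ * ∮ y in C(0, c), leval (y ^ 2) q / (y * F (y ^ 2)) by
    exact H R (by rw [Rlp_span d hdk]; trivial)
  intro q hq
  induction hq using Submodule.span_induction with
  | zero => simp [leval_zero, zero_div, circleIntegral]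
  | add x y hx hy hPx hPy =>
    rw [map_add, hPx, hPy, ← mul_add]
    congr 1
    have he : (fun z : ℂ => leval (z ^ 2) (x + y) / (z * F (z ^ 2)))
        = fun z : ℂ => leval (z ^ 2) x / (z * F (z ^ 2)) + leval (z ^ 2) y / (z * F (z ^ 2)) := by
      funext z
      rw [leval_add, add_div]
    rw [he, circleIntegral_add' (hInt x) (hInt y)]
  | smul a x hx hPx =>
    rw [map_smul, smul_eq_mul, hPx]
    have he : (fun z : ℂ => leval (z ^ 2) (a • x) / (z * F (z ^ 2)))
        = fun z : ℂ => a • (leval (z ^ 2) x / (z * F (z ^ 2))) := by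
      funext z
      rw [leval_smul, smul_eq_mul, mul_div_assoc]
    rw [he, circleIntegral.integral_smul]
    rw [smul_eq_mul]; ring
  | mem x hx =>
    obtain ⟨m, rfl⟩ := hx
    rcases Nat.eq_zero_or_pos m with rfl | hm
    · have hR0 : Rlp d 0 = 1 := by
        simp [Rlp, hd0]
      rw [hR0, hL1]
      have hcongr : (fun y : ℂ => leval (y ^ 2) (1 : LaurentPolynomial ℂ) / (y * F (y ^ 2)))
          = fun y : ℂ => (y - 0)⁻¹ • (F (y ^ 2))⁻¹ := by
        funext y
        rw [leval_one, sub_zero, smul_eq_mul, one_div, mul_inv]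
      rw [hcongr]
      have hcau := Complex.two_pi_I_inv_smul_circleIntegral_sub_inv_smul_of_differentiable_on_off_countable
        (Set.countable_empty) (Metric.mem_ball_self hc) (f := fun y : ℂ => (F (y ^ 2))⁻¹)
        (fun y hy => (hGdiff y hy).continuousAt.continuousWithinAt)
        (fun z hz => hGdiff z (ball_subset_closedBall hz.1))
      rw [smul_eq_mul] at hcau
      rw [hcau]
      norm_num [hF0]
    · obtain ⟨s, hs⟩ : ∃ s : ℕ, (m + 1) / 2 = s := ⟨_, rfl⟩
      obtain ⟨j, rfl⟩ : ∃ j : ℕ, m = j + s := ⟨m - s, by omega⟩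
      have hs1 : 1 ≤ s := by omega
      have hLm : L (Rlp d (j + s)) = 0 := by
        have h0 : Rlp d 0 = 1 := by simp [Rlp, hd0]
        have h := horth 0 (j + s) (by omega)
        rwa [h0, one_mul] at h
      rw [hLm]
      set m' : ℕ := j + s with hm'
      set Tl : ℂ → ℂ := fun w => ∑' i, d (i + (m' + 1)) * w ^ i with hTl
      have hTlsum : ∀ w : ℂ, ‖w‖ < r → Summable fun i => d (i + (m' + 1)) * w ^ i := by
        intro w hw
        rcases eq_or_ne w 0 with rfl | hw0
        · apply summable_of_ne_finset_zero (s := {0})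
          intro i hi
          simp only [Finset.mem_singleton] at hi
          simp [zero_pow hi]
        · have h1 := (summable_nat_add_iff (m' + 1)).2 (hrconv w hw)
          have h2 := h1.mul_right ((w ^ (m' + 1))⁻¹)
          apply h2.congr
          intro i
          rw [pow_add]
          field_simp
      have hTldiff : ∀ w : ℂ, ‖w‖ ≤ c ^ 2 → DifferentiableAt ℂ Tl w :=
        fun w hw => diffAt_tsum hTlsum (lt_of_le_of_lt hw hcr)
      have hsplit : ∀ w : ℂ, ‖w‖ < r →
          (∑ k ∈ Finset.range (m' + 1), d k * w ^ k) = F w - w ^ (m' + 1) * Tl w := by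
        intro w hw
        have h1 := Summable.sum_add_tsum_nat_add (m' + 1) (hrconv w hw)
        have h2 : ∑' i : ℕ, d (i + (m' + 1)) * w ^ (i + (m' + 1)) = w ^ (m' + 1) * Tl w := by
          rw [hTl, ← tsum_mul_left]
          exact tsum_congr fun i => by rw [pow_add]; ring
        rw [h2] at h1
        exact eq_sub_of_add_eq h1
      have hkey : (∮ y in C(0, c), leval (y ^ 2) (Rlp d m') / (y * F (y ^ 2))) = 0 := by
        have heq : Set.EqOn (fun y : ℂ => leval (y ^ 2) (Rlp d m') / (y * F (y ^ 2)))
            (fun y : ℂ => (y - 0) ^ (-(2 * (s : ℤ)) - 1)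
              + y * -((y ^ 2) ^ j * Tl (y ^ 2) * (F (y ^ 2))⁻¹)) (sphere (0:ℂ) c) := by
          intro y hy
          dsimp only
          have hy0 : y ≠ 0 := hyne y hy
          have hy2' : ‖y ^ 2‖ = c ^ 2 := hy2 y hy
          have hy20 : (y ^ 2 : ℂ) ≠ 0 := pow_ne_zero _ hy0
          have hFy : F (y ^ 2) ≠ 0 := hFne _ hy2'.le
          have hlv : leval (y ^ 2) (Rlp d m')
              = (∑ k ∈ Finset.range (m' + 1), d k * (y ^ 2) ^ k) * ((y ^ 2) ^ s)⁻¹ := by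
            rw [Rlp, leval_finset_sum, Finset.sum_mul]
            refine Finset.sum_congr rfl fun k hk => ?_
            rw [leval_C_mul_T]
            rw [show ((m' + 1) / 2 : ℕ) = s from by omega]
            rw [zpow_sub₀ hy20, zpow_natCast, zpow_natCast, div_eq_mul_inv, mul_assoc]
          rw [hlv, hsplit (y ^ 2) (by rw [hy2']; exact hcr)]
          rw [show (-(2 * (s : ℤ)) - 1) = -((2 * s + 1 : ℕ) : ℤ) from by push_cast; ring,
            zpow_neg, zpow_natCast, sub_zero]
          rw [hm']
          field_simp
          ring
        rw [circleIntegral.integral_congr hc.le heq]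
        have hint1 : CircleIntegrable (fun y : ℂ => (y - 0) ^ (-(2 * (s : ℤ)) - 1)) 0 c := by
          rw [circleIntegrable_sub_zpow_iff]
          right; right
          simp only [mem_sphere_iff_norm, zero_sub, norm_neg, norm_zero, abs_of_pos hc]
          exact hc.ne
        have hBdiff : ∀ y ∈ closedBall (0:ℂ) c, DifferentiableAt ℂ
            (fun y : ℂ => y * -((y ^ 2) ^ j * Tl (y ^ 2) * (F (y ^ 2))⁻¹)) y := by
          intro y hy
          have h1 : DifferentiableAt ℂ (fun y : ℂ => (y ^ 2) ^ j) y := (hsqd y).pow j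
          have h2 : DifferentiableAt ℂ (fun y : ℂ => Tl (y ^ 2)) y :=
            DifferentiableAt.comp (g := Tl) y (hTldiff (y ^ 2) (hsq y hy)) (hsqd y)
          have h3 : DifferentiableAt ℂ (fun y : ℂ => (F (y ^ 2))⁻¹) y := hGdiff y hy
          exact differentiableAt_fun_id.mul (((h1.mul h2).mul h3).neg)
        have hint2 : CircleIntegrable
            (fun y : ℂ => y * -((y ^ 2) ^ j * Tl (y ^ 2) * (F (y ^ 2))⁻¹)) 0 c := by
          apply ContinuousOn.circleIntegrable hc.le
          intro y hy
          exact (hBdiff y (sphere_subset_closedBall hy)).continuousAt.continuousWithinAt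
        rw [circleIntegral_add' hint1 hint2]
        rw [circleIntegral.integral_sub_zpow_of_ne (by omega) 0 0 c]
        rw [Complex.circleIntegral_eq_zero_of_differentiable_on_off_countable hc.le Set.countable_empty
          (fun y hy => (hBdiff y hy).continuousAt.continuousWithinAt)
          (fun z hz => hBdiff z (ball_subset_closedBall hz.1))]
        ring
      rw [hkey, mul_zero]
end

section
/- The ℂ-linear span of the family {R_n : n ≥ 0} is the whole space of Laurent polynomials over ℂ, i.e. every Laurent polynomial ∑_{j=p}^{q} λ_j x^j (p, q ∈ ℤ, p ≤ q, λ_j ∈ ℂ) is a finite ℂ-linear combination of the R_n. -/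
open LaurentPolynomial in
lemma C_mul_T_eq_smul (a : ℂ) (n : ℤ) : C a * T n = a • T n := by
  rw [← LaurentPolynomial.single_eq_C_mul_T, LaurentPolynomial.T, AddMonoidAlgebra.smul_single,
    smul_eq_mul, mul_one]

/-- The ℂ-linear span of `{R_n : n ≥ 0}` is the whole space of Laurent
polynomials over ℂ, where `(d_k)` is any sequence of nonzero complex numbers with
`d_0 = 1`. -/
theorem stmt_7 (d : ℕ → ℂ) (hd0 : d 0 = 1) (hdk : ∀ k, d k ≠ 0) :
    Submodule.span ℂ (Set.range (Rlp d)) = ⊤ := by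
  classical
  set S := Submodule.span ℂ (Set.range (Rlp d)) with hS
  have hR : ∀ n, Rlp d n ∈ S := fun n => Submodule.subset_span (Set.mem_range_self n)
  have hT : ∀ n : ℕ, ∀ j : ℕ, j ≤ n →
      LaurentPolynomial.T (j : ℤ) ∈ S ∧ LaurentPolynomial.T (-(j : ℤ)) ∈ S := by
    intro n
    induction n with
    | zero =>
      intro j hj
      interval_cases j
      have h0 : Rlp d 0 = LaurentPolynomial.T 0 := by
        simp [Rlp, hd0]
      constructor <;> simpa [← h0] using hR 0
    | succ n ih =>
      have hmem : ∀ m : ℤ, -(n : ℤ) ≤ m → m ≤ n → LaurentPolynomial.T m ∈ S := by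
        intro m h1 h2
        rcases le_or_gt 0 m with h | h
        · have := (ih m.toNat (by omega)).1
          rwa [Int.toNat_of_nonneg h] at this
        · have := (ih (-m).toNat (by omega)).2
          rwa [Int.toNat_of_nonneg (by omega), neg_neg] at this
      -- T (-(n+1)) ∈ S
      have hdiv1 : ((2 * n + 1 + 1) / 2 : ℕ) = n + 1 := by omega
      have hneg : LaurentPolynomial.T (-((n : ℤ) + 1)) ∈ S := by
        have hsum : Rlp d (2 * n + 1) =
            (∑ k ∈ Finset.range (2 * n + 1),
              LaurentPolynomial.C (d (k + 1)) *
                LaurentPolynomial.T (((k : ℤ) + 1) - ((n : ℤ) + 1))) +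
            LaurentPolynomial.T (-((n : ℤ) + 1)) := by
          rw [Rlp, hdiv1, Finset.sum_range_succ']
          simp [hd0]
        have hsumS : (∑ k ∈ Finset.range (2 * n + 1),
            LaurentPolynomial.C (d (k + 1)) *
              LaurentPolynomial.T (((k : ℤ) + 1) - ((n : ℤ) + 1))) ∈ S := by
          refine Submodule.sum_mem _ fun k hk => ?_
          rw [C_mul_T_eq_smul]
          refine Submodule.smul_mem _ _ (hmem _ ?_ ?_) <;>
            · simp only [Finset.mem_range] at hk; omega
        have : LaurentPolynomial.T (-((n : ℤ) + 1)) = Rlp d (2 * n + 1) -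
            (∑ k ∈ Finset.range (2 * n + 1),
              LaurentPolynomial.C (d (k + 1)) *
                LaurentPolynomial.T (((k : ℤ) + 1) - ((n : ℤ) + 1))) := by
          rw [hsum]; ring
        rw [this]
        exact Submodule.sub_mem _ (hR _) hsumS
      have hmem' : ∀ m : ℤ, -((n : ℤ) + 1) ≤ m → m ≤ n → LaurentPolynomial.T m ∈ S := by
        intro m h1 h2
        rcases eq_or_lt_of_le h1 with h | h
        · rw [← h]; exact hneg
        · exact hmem m (by omega) h2
      -- T (n+1) ∈ S
      have hdiv2 : ((2 * n + 2 + 1) / 2 : ℕ) = n + 1 := by omega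
      have hpos : LaurentPolynomial.T ((n : ℤ) + 1) ∈ S := by
        have hsum : Rlp d (2 * n + 2) =
            (∑ k ∈ Finset.range (2 * n + 2),
              LaurentPolynomial.C (d k) * LaurentPolynomial.T ((k : ℤ) - ((n : ℤ) + 1))) +
            LaurentPolynomial.C (d (2 * n + 2)) * LaurentPolynomial.T ((n : ℤ) + 1) := by
          rw [Rlp, hdiv2, Finset.sum_range_succ]
          congr 2
          push_cast; ring
        have hsumS : (∑ k ∈ Finset.range (2 * n + 2),
            LaurentPolynomial.C (d k) * LaurentPolynomial.T ((k : ℤ) - ((n : ℤ) + 1))) ∈ S := by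
          refine Submodule.sum_mem _ fun k hk => ?_
          rw [C_mul_T_eq_smul]
          refine Submodule.smul_mem _ _ (hmem' _ ?_ ?_) <;>
            · simp only [Finset.mem_range] at hk; omega
        have hCmul : LaurentPolynomial.C (d (2 * n + 2)) * LaurentPolynomial.T ((n : ℤ) + 1) ∈ S := by
          have : LaurentPolynomial.C (d (2 * n + 2)) * LaurentPolynomial.T ((n : ℤ) + 1) =
              Rlp d (2 * n + 2) - (∑ k ∈ Finset.range (2 * n + 2),
                LaurentPolynomial.C (d k) * LaurentPolynomial.T ((k : ℤ) - ((n : ℤ) + 1))) := by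
            rw [hsum]; ring
          rw [this]
          exact Submodule.sub_mem _ (hR _) hsumS
        rw [C_mul_T_eq_smul] at hCmul
        have := Submodule.smul_mem S (d (2 * n + 2))⁻¹ hCmul
        rwa [inv_smul_smul₀ (hdk _)] at this
      intro j hj
      rcases Nat.lt_succ_iff_lt_or_eq.mp (Nat.lt_succ_of_le hj) with h | rfl
      · exact ih j (by omega)
      · constructor
        · simpa using hpos
        · simpa using hneg
  have hTall : ∀ m : ℤ, LaurentPolynomial.T m ∈ S := by
    intro m
    rcases le_or_gt 0 m with h | h
    · have := (hT m.toNat m.toNat le_rfl).1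
      rwa [Int.toNat_of_nonneg h] at this
    · have := (hT (-m).toNat (-m).toNat le_rfl).2
      rwa [Int.toNat_of_nonneg (by omega), neg_neg] at this
  rw [eq_top_iff]
  rintro f -
  induction f using LaurentPolynomial.induction_on' with
  | add p q hp hq => exact Submodule.add_mem _ hp hq
  | C_mul_T m a =>
    rw [C_mul_T_eq_smul]
    exact Submodule.smul_mem _ _ (hTall m)
end

section
/- For every m ∈ ℕ and every finite sequence of complex numbers s_0, s_1, ..., s_m with s_0 = 1, there exists a positive measure μ on the Borel subsets of ℂ which is finitely atomic (a finite nonnegative combination of Dirac measures) such that ∫_ℂ z^k dμ(z) = s_k for every k ∈ {0, 1, ..., m}. -/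
set_option maxHeartbeats 1000000


open scoped ENNReal NNReal
open MeasureTheory

/-- Integral of `z ^ k` against a finite weighted sum of Dirac measures. -/
lemma integral_pow_sum_dirac (N : ℕ) (w : Fin N → ℝ≥0) (zs : Fin N → ℂ) (k : ℕ) :
    ∫ z, z ^ k ∂(∑ j, (w j : ℝ≥0∞) • MeasureTheory.Measure.dirac (zs j))
      = ∑ j, (w j : ℂ) * zs j ^ k := by
  have hmeas : Measurable fun z : ℂ => z ^ k := measurable_id.pow_const k
  have hint : ∀ a : ℂ, Integrable (fun z : ℂ => z ^ k) (Measure.dirac a) := by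
    intro a
    refine ⟨hmeas.aestronglyMeasurable, ?_⟩
    simp only [HasFiniteIntegral, lintegral_dirac]
    exact ENNReal.coe_lt_top
  rw [integral_finset_sum_measure]
  · refine Finset.sum_congr rfl fun j _ => ?_
    rw [integral_smul_measure, integral_dirac, ENNReal.coe_toReal, Complex.real_smul]
  · intro j _
    exact (hint (zs j)).smul_measure ENNReal.coe_ne_top

/-- Algebraic core: prescribed "moments" by nonnegative combinations of points. -/
lemma exists_atoms (m : ℕ) : ∀ (c : ℝ≥0), 0 < c → ∀ s : ℕ → ℂ,
    ∃ (N : ℕ) (w : Fin N → ℝ≥0) (zs : Fin N → ℂ),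
      (∑ j, (w j : ℂ)) = ((c : ℝ) : ℂ) ∧
      ∀ k, 0 < k → k ≤ m → ∑ j, (w j : ℂ) * zs j ^ k = s k := by
  induction m with
  | zero =>
    intro c hc s
    exact ⟨1, fun _ => c, fun _ => 0, by simp,
      fun k hk hk' => absurd (hk.trans_le hk') (lt_irrefl 0)⟩
  | succ m ih =>
    intro c hc s
    obtain ⟨N', w', zs', hmass, hmom⟩ := ih (c / 2) (by positivity) s
    set t : ℂ := ∑ j, (w' j : ℂ) * zs' j ^ (m + 1) with ht
    have hc0 : ((c : ℝ) : ℂ) ≠ 0 := by exact_mod_cast hc.ne'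
    have hm0 : ((m : ℂ) + 1) ≠ 0 := by exact_mod_cast (Nat.succ_ne_zero m)
    obtain ⟨z, hz⟩ := IsAlgClosed.exists_pow_nat_eq
      ((s (m + 1) - t) / ((c : ℝ) : ℂ) * 2) (Nat.succ_pos m)
    set ζ : ℂ := Complex.exp (2 * Real.pi * Complex.I / ((m + 1 : ℕ) : ℂ)) with hζdef
    have hζ : IsPrimitiveRoot ζ (m + 1) :=
      Complex.isPrimitiveRoot_exp _ (Nat.succ_ne_zero m)
    set w0 : ℝ≥0 := c / (2 * (m + 1)) with hw0
    refine ⟨N' + (m + 1), Fin.append w' (fun _ => w0),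
      Fin.append zs' (fun j => z * ζ ^ (j : ℕ)), ?_, ?_⟩
    · rw [Fin.sum_univ_add]
      simp only [Fin.append_left, Fin.append_right]
      rw [hmass, Finset.sum_const, Finset.card_univ, Fintype.card_fin]
      push_cast [hw0]
      field_simp
      have h2 : (2 + (m : ℂ) * 2) ≠ 0 := by
        rw [show (2 + (m : ℂ) * 2) = 2 * ((m : ℂ) + 1) by ring]
        exact mul_ne_zero two_ne_zero hm0
      rw [nsmul_eq_mul]
      push_cast
      field_simp
      ring
    · intro k hk hk'
      rw [Fin.sum_univ_add]
      simp only [Fin.append_left, Fin.append_right]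
      have hblock : ∀ k : ℕ, (∑ j : Fin (m + 1), (w0 : ℂ) * (z * ζ ^ (j : ℕ)) ^ k)
          = (w0 : ℂ) * z ^ k * ∑ j ∈ Finset.range (m + 1), (ζ ^ k) ^ j := by
        intro k
        rw [Finset.mul_sum, Fin.sum_univ_eq_sum_range (fun j => (w0 : ℂ) * (z * ζ ^ j) ^ k)]
        refine Finset.sum_congr rfl fun j _ => ?_
        rw [mul_pow, ← pow_mul, mul_comm j k, pow_mul]
        ring
      rcases eq_or_lt_of_le hk' with rfl | hlt
      · -- k = m + 1
        have hgeom : ∑ j ∈ Finset.range (m + 1), (ζ ^ (m + 1)) ^ j = (m : ℂ) + 1 := by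
          rw [hζ.pow_eq_one]
          simp
        rw [hblock, hgeom, hz]
        push_cast [hw0]
        field_simp
        ring
      · -- k ≤ m
        have hkm : k ≤ m := Nat.lt_succ_iff.mp hlt
        have hx : ζ ^ k ≠ 1 := hζ.pow_ne_one_of_pos_of_lt hk.ne' hlt
        have hgeom : ∑ j ∈ Finset.range (m + 1), (ζ ^ k) ^ j = 0 := by
          rw [geom_sum_eq hx, ← pow_mul, mul_comm k (m + 1), pow_mul, hζ.pow_eq_one,
            one_pow, sub_self, zero_div]
        rw [hblock, hgeom, mul_zero, add_zero, hmom k hk hkm]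

/-- For every `m ∈ ℕ` and complex numbers `s_0, ..., s_m` with `s_0 = 1`,
there is a finitely atomic positive measure `μ` on (the Borel subsets of) ℂ — a finite
nonnegative combination of Dirac measures — with `∫ z^k dμ = s_k` for `k = 0, ..., m`. -/
theorem stmt_9 (m : ℕ) (s : ℕ → ℂ) (hs0 : s 0 = 1) :
    ∃ μ : MeasureTheory.Measure ℂ,
      (∃ (N : ℕ) (w : Fin N → ℝ≥0) (zs : Fin N → ℂ),
        μ = ∑ j, (w j : ℝ≥0∞) • MeasureTheory.Measure.dirac (zs j)) ∧
      ∀ k : ℕ, k ≤ m → ∫ z, z ^ k ∂μ = s k := by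
  obtain ⟨N, w, zs, hmass, hmom⟩ := exists_atoms m 1 one_pos s
  refine ⟨∑ j, (w j : ℝ≥0∞) • MeasureTheory.Measure.dirac (zs j), ⟨N, w, zs, rfl⟩, ?_⟩
  intro k hk
  rw [integral_pow_sum_dirac]
  rcases Nat.eq_zero_or_pos k with rfl | hk0
  · simpa [hs0] using hmass
  · exact hmom k hk0 hk
end

section
/- For every n ≥ 1, the rational function identity Q̃_{2n+1}(x) = (x^{−1} + g_{2n+1}) · Q̃_{2n}(x) + f_{2n+1} · Q̃_{2n−1}(x) holds (as Laurent polynomials in x), where g_k = −1/c_k and f_k = −λ_k ξ_{k−2}/ξ_k; moreover for n = 0, Q̃_1(x) = (x^{−1} + g_1) Q̃_0(x). -/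
/-- With `P_n` the monic polynomials generated by
`P_n = (X − c_n) P_{n−1} − λ_n X P_{n−2}` (`P_{−1} = 0`, `P_0 = 1`, `c_n ≠ 0` for `n ≥ 1`,
`λ_n ≠ 0` for `n ≥ 2`), `c_0 := 1`, `ξ_k = (−1)^k ∏_{j=0}^k c_j`,
`Q̃_{2n} = P_{2n}/(ξ_{2n} x^n)`, `Q̃_{2n+1} = P_{2n+1}/(ξ_{2n+1} x^{n+1})`:
for every `n ≥ 1`,
`Q̃_{2n+1} = (x⁻¹ + g_{2n+1}) Q̃_{2n} + f_{2n+1} Q̃_{2n−1}` as Laurent polynomials, where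
`g_k = −1/c_k`, `f_k = −λ_k ξ_{k−2}/ξ_k`; moreover `Q̃_1 = (x⁻¹ + g_1) Q̃_0`. -/
theorem stmt_10 (c lam : ℕ → ℂ) (hc0 : c 0 = 1)
    (hc : ∀ n : ℕ, 1 ≤ n → c n ≠ 0) (hlam : ∀ n : ℕ, 2 ≤ n → lam n ≠ 0)
    (P : ℕ → Polynomial ℂ) (hP0 : P 0 = 1)
    (hP1 : P 1 = (Polynomial.X - Polynomial.C (c 1)) * P 0)
    (hPrec : ∀ n : ℕ, 2 ≤ n →
      P n = (Polynomial.X - Polynomial.C (c n)) * P (n - 1) -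
        Polynomial.C (lam n) * Polynomial.X * P (n - 2)) :
    let ξ : ℕ → ℂ := fun k => (-1) ^ k * ∏ j ∈ Finset.range (k + 1), c j
    let g : ℕ → ℂ := fun k => -(c k)⁻¹
    let fc : ℕ → ℂ := fun k => -(lam k * ξ (k - 2) / ξ k)
    let Qt : ℕ → LaurentPolynomial ℂ := fun k =>
      LaurentPolynomial.C (ξ k)⁻¹ * Polynomial.toLaurent (P k) *
        LaurentPolynomial.T (-(((k + 1) / 2 : ℕ) : ℤ))
    (∀ n : ℕ, 1 ≤ n →
      Qt (2 * n + 1) =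
        (LaurentPolynomial.T (-1) + LaurentPolynomial.C (g (2 * n + 1))) * Qt (2 * n) +
          LaurentPolynomial.C (fc (2 * n + 1)) * Qt (2 * n - 1)) ∧
    Qt 1 = (LaurentPolynomial.T (-1) + LaurentPolynomial.C (g 1)) * Qt 0 := by
  intro ξ g fc Qt
  have hcne : ∀ j, c j ≠ 0 := by
    intro j
    rcases Nat.eq_zero_or_pos j with h | h
    · simp [h, hc0]
    · exact hc j h
  have hξ : ∀ k, ξ k ≠ 0 := by
    intro k
    exact mul_ne_zero (by simp) (Finset.prod_ne_zero_iff.mpr fun j _ => hcne j)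
  have hstep : ∀ k, ξ (k + 1) = -(c (k + 1)) * ξ k := by
    intro k
    simp only [ξ, Finset.prod_range_succ, pow_succ]
    ring
  have hT : (LaurentPolynomial.T 1 * LaurentPolynomial.T (-1) : LaurentPolynomial ℂ) = 1 := by
    rw [← LaurentPolynomial.T_add]; norm_num
  constructor
  · intro n hn
    have hrec := hPrec (2 * n + 1) (by omega)
    rw [show 2 * n + 1 - 1 = 2 * n by omega, show 2 * n + 1 - 2 = 2 * n - 1 by omega] at hrec
    have e1 : (ξ (2 * n + 1))⁻¹ = g (2 * n + 1) * (ξ (2 * n))⁻¹ := by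
      show (ξ (2 * n + 1))⁻¹ = -(c (2 * n + 1))⁻¹ * (ξ (2 * n))⁻¹
      rw [hstep (2 * n), neg_mul, inv_neg, mul_inv, neg_mul]
    have e2 : (ξ (2 * n + 1))⁻¹ * c (2 * n + 1) = -(ξ (2 * n))⁻¹ := by
      rw [hstep (2 * n), neg_mul, inv_neg, mul_inv, neg_mul, neg_inj, mul_comm,
        ← mul_assoc, mul_inv_cancel₀ (hcne (2 * n + 1)), one_mul]
    have e3 : (ξ (2 * n + 1))⁻¹ * lam (2 * n + 1) = -(fc (2 * n + 1) * (ξ (2 * n - 1))⁻¹) := by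
      show _ = -(-(lam (2 * n + 1) * ξ (2 * n + 1 - 2) / ξ (2 * n + 1)) * (ξ (2 * n - 1))⁻¹)
      rw [show 2 * n + 1 - 2 = 2 * n - 1 by omega]
      have h1 := hξ (2 * n + 1)
      have h2 := hξ (2 * n - 1)
      field_simp
    have E1 : (LaurentPolynomial.C (ξ (2 * n + 1))⁻¹ : LaurentPolynomial ℂ) =
        LaurentPolynomial.C (g (2 * n + 1)) * LaurentPolynomial.C (ξ (2 * n))⁻¹ := by
      rw [← map_mul, e1]
    have E2 : (LaurentPolynomial.C (ξ (2 * n + 1))⁻¹ : LaurentPolynomial ℂ) *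
        LaurentPolynomial.C (c (2 * n + 1)) = -LaurentPolynomial.C (ξ (2 * n))⁻¹ := by
      rw [← map_mul, e2, map_neg]
    have E3 : (LaurentPolynomial.C (ξ (2 * n + 1))⁻¹ : LaurentPolynomial ℂ) *
        LaurentPolynomial.C (lam (2 * n + 1)) =
        -(LaurentPolynomial.C (fc (2 * n + 1)) * LaurentPolynomial.C (ξ (2 * n - 1))⁻¹) := by
      rw [← map_mul, ← map_mul, e3, map_neg]
    simp only [Qt]
    rw [hrec,
      show ((2 * n + 1 + 1) / 2 : ℕ) = n + 1 by omega,
      show ((2 * n + 1) / 2 : ℕ) = n by omega,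
      show ((2 * n - 1 + 1) / 2 : ℕ) = n by omega,
      show (-(((n + 1 : ℕ)) : ℤ)) = -1 + -(n : ℤ) by push_cast; ring,
      LaurentPolynomial.T_add]
    simp only [map_sub, map_mul, Polynomial.toLaurent_X, Polynomial.toLaurent_C]
    linear_combination
      (LaurentPolynomial.C (ξ (2 * n + 1))⁻¹ * Polynomial.toLaurent (P (2 * n)) *
          LaurentPolynomial.T (-(n : ℤ)) -
        LaurentPolynomial.C (ξ (2 * n + 1))⁻¹ * LaurentPolynomial.C (lam (2 * n + 1)) *
          Polynomial.toLaurent (P (2 * n - 1)) * LaurentPolynomial.T (-(n : ℤ))) * hT +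
      Polynomial.toLaurent (P (2 * n)) * LaurentPolynomial.T (-(n : ℤ)) * E1 -
      Polynomial.toLaurent (P (2 * n)) * LaurentPolynomial.T (-1) *
        LaurentPolynomial.T (-(n : ℤ)) * E2 -
      Polynomial.toLaurent (P (2 * n - 1)) * LaurentPolynomial.T (-(n : ℤ)) * E3
  · have hx1 : ξ 1 = -(c 1) := by
      simp [ξ, Finset.prod_range_succ, hc0]
    have hx0 : ξ 0 = 1 := by simp [ξ, hc0]
    have hc1 : (LaurentPolynomial.C (c 1)⁻¹ : LaurentPolynomial ℂ) *
        LaurentPolynomial.C (c 1) = 1 := by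
      rw [← map_mul, inv_mul_cancel₀ (hcne 1), map_one]
    show LaurentPolynomial.C (ξ 1)⁻¹ * Polynomial.toLaurent (P 1) *
        LaurentPolynomial.T (-(((1 + 1) / 2 : ℕ) : ℤ)) = _
    rw [hP1, hP0, hx1]
    show _ = (LaurentPolynomial.T (-1) + LaurentPolynomial.C (-(c 1)⁻¹)) *
      (LaurentPolynomial.C (ξ 0)⁻¹ * Polynomial.toLaurent (P 0) *
        LaurentPolynomial.T (-(((0 + 1) / 2 : ℕ) : ℤ)))
    rw [hP0, hx0, show (-(((1 + 1) / 2 : ℕ) : ℤ)) = -1 by norm_num,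
      show (-(((0 + 1) / 2 : ℕ) : ℤ)) = 0 by norm_num]
    simp only [map_mul, map_sub, Polynomial.toLaurent_X, Polynomial.toLaurent_C, map_one,
      inv_one, inv_neg, map_neg, mul_one, one_mul, LaurentPolynomial.T_zero]
    linear_combination (-(LaurentPolynomial.C (c 1)⁻¹)) * hT + LaurentPolynomial.T (-1 : ℤ) * hc1
end

section
/- For every n ≥ 0, the identity Q̃_{2n+2}(x) = (1 + g_{2n+2} x) · Q̃_{2n+1}(x) + f_{2n+2} · Q̃_{2n}(x) holds (as Laurent polynomials in x), where g_k = −1/c_k and f_k = −λ_k ξ_{k−2}/ξ_k. -/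
open LaurentPolynomial Polynomial in
/-- With `P_n` the monic polynomials generated by
`P_n = (X − c_n) P_{n−1} − λ_n X P_{n−2}` (`P_{−1} = 0`, `P_0 = 1`, `c_n ≠ 0` for `n ≥ 1`,
`λ_n ≠ 0` for `n ≥ 2`), `c_0 := 1`, `ξ_k = (−1)^k ∏_{j=0}^k c_j`,
`Q̃_{2n} = P_{2n}/(ξ_{2n} x^n)`, `Q̃_{2n+1} = P_{2n+1}/(ξ_{2n+1} x^{n+1})`:
for every `n ≥ 0`,
`Q̃_{2n+2} = (1 + g_{2n+2} x) Q̃_{2n+1} + f_{2n+2} Q̃_{2n}` as Laurent polynomials, where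
`g_k = −1/c_k`, `f_k = −λ_k ξ_{k−2}/ξ_k`. -/
theorem stmt_11 (c lam : ℕ → ℂ) (hc0 : c 0 = 1)
    (hc : ∀ n : ℕ, 1 ≤ n → c n ≠ 0) (hlam : ∀ n : ℕ, 2 ≤ n → lam n ≠ 0)
    (P : ℕ → Polynomial ℂ) (hP0 : P 0 = 1)
    (hP1 : P 1 = (Polynomial.X - Polynomial.C (c 1)) * P 0)
    (hPrec : ∀ n : ℕ, 2 ≤ n →
      P n = (Polynomial.X - Polynomial.C (c n)) * P (n - 1) -
        Polynomial.C (lam n) * Polynomial.X * P (n - 2)) :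
    let ξ : ℕ → ℂ := fun k => (-1) ^ k * ∏ j ∈ Finset.range (k + 1), c j
    let g : ℕ → ℂ := fun k => -(c k)⁻¹
    let fc : ℕ → ℂ := fun k => -(lam k * ξ (k - 2) / ξ k)
    let Qt : ℕ → LaurentPolynomial ℂ := fun k =>
      LaurentPolynomial.C (ξ k)⁻¹ * Polynomial.toLaurent (P k) *
        LaurentPolynomial.T (-(((k + 1) / 2 : ℕ) : ℤ))
    ∀ n : ℕ,
      Qt (2 * n + 2) =
        (1 + LaurentPolynomial.C (g (2 * n + 2)) * LaurentPolynomial.T 1) * Qt (2 * n + 1) +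
          LaurentPolynomial.C (fc (2 * n + 2)) * Qt (2 * n) := by
  intro ξ g fc Qt n
  have hcall : ∀ j : ℕ, c j ≠ 0 := by
    intro j
    rcases Nat.eq_zero_or_pos j with h | h
    · simp [h, hc0]
    · exact hc j h
  have hξ : ∀ k, ξ k ≠ 0 := by
    intro k
    simp only [ξ, mul_ne_zero_iff]
    refine ⟨pow_ne_zero _ (by norm_num), Finset.prod_ne_zero_iff.mpr fun j _ => hcall j⟩
  have hxi2 : ξ (2*n+2) = (-(c (2*n+2))) * ξ (2*n+1) := by
    simp only [ξ, Finset.prod_range_succ, pow_succ]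
    ring
  have hrec := hPrec (2*n+2) (by omega)
  have key : Polynomial.toLaurent (P (2*n+2)) =
      (T 1 - LaurentPolynomial.C (c (2*n+2))) * Polynomial.toLaurent (P (2*n+1)) -
        LaurentPolynomial.C (lam (2*n+2)) * T 1 * Polynomial.toLaurent (P (2*n)) := by
    have h1 : (2*n+2) - 1 = 2*n+1 := by omega
    have h2 : (2*n+2) - 2 = 2*n := by omega
    rw [h1, h2] at hrec
    rw [hrec]
    simp [Polynomial.toLaurent_X, Polynomial.toLaurent_C, map_sub, map_mul]
  have hd2 : (((2*n+2+1)/2 : ℕ) : ℤ) = (n : ℤ) + 1 := by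
    norm_cast; omega
  have hd1 : (((2*n+1+1)/2 : ℕ) : ℤ) = (n : ℤ) + 1 := by
    norm_cast; omega
  have hd0 : (((2*n+1)/2 : ℕ) : ℤ) = (n : ℤ) := by
    norm_cast; omega
  have hT : (T (-(n:ℤ)) : LaurentPolynomial ℂ) = T 1 * T (-((n:ℤ)+1)) := by
    rw [← T_add]; ring_nf
  -- coefficient identities
  have key1 : LaurentPolynomial.C ((ξ (2*n+2))⁻¹) * (T 1 - LaurentPolynomial.C (c (2*n+2))) =
      (1 + LaurentPolynomial.C (g (2*n+2)) * T 1) * LaurentPolynomial.C ((ξ (2*n+1))⁻¹) := by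
    have e : (ξ (2*n+2))⁻¹ = g (2*n+2) * (ξ (2*n+1))⁻¹ := by
      rw [hxi2, mul_inv, inv_neg]
    have e2 : g (2*n+2) * c (2*n+2) = -1 := by
      simp only [g]
      rw [neg_mul, inv_mul_cancel₀ (hcall _)]
    rw [e]
    simp only [map_mul]
    have : LaurentPolynomial.C (g (2*n+2)) * LaurentPolynomial.C (c (2*n+2)) = -1 := by
      rw [← map_mul, e2, map_neg, map_one]
    linear_combination (- LaurentPolynomial.C ((ξ (2*n+1))⁻¹)) * this
  have key2 : (ξ (2*n+2))⁻¹ * lam (2*n+2) = -(fc (2*n+2) * (ξ (2*n))⁻¹) := by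
    simp only [fc]
    have h2 : (2*n+2) - 2 = 2*n := by omega
    rw [h2]
    field_simp [hξ (2*n), hξ (2*n+2)]
  have key2' : LaurentPolynomial.C ((ξ (2*n+2))⁻¹ * lam (2*n+2)) =
      - LaurentPolynomial.C (fc (2*n+2) * (ξ (2*n))⁻¹) := by
    rw [key2, map_neg]
  simp only [Qt, key, hd2, hd1, hd0]
  rw [hT]
  simp only [map_mul] at key2'
  linear_combination (Polynomial.toLaurent (P (2*n+1)) * T (-((n:ℤ)+1))) * key1 +
    (Polynomial.toLaurent (P (2*n)) * T 1 * T (-((n:ℤ)+1))) * (- key2')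
end
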